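/- arXiv:1311.0331 — 11 statements merged into one kernel-verified Lean document; each statement's English description precedes it below -/
import Mathlib

section
/- Wadge's Duality theorem fails in the Scott domain 𝒫(ℕ): let 𝒳 = {X ⊆ ℕ : 0 ∈ X} and 𝒴 = {X ⊆ ℕ : X is finite}. Then there is no continuous map f : 𝒫(ℕ) → 𝒫(ℕ) with 𝒴 = f⁻¹(𝒫(ℕ) ∖ 𝒳), and there is no continuous map g : 𝒫(ℕ) → 𝒫(ℕ) with 𝒳 = g⁻¹(𝒴). -/
open Topology

/-- The Scott topology on 𝒫(ℕ), generated by the basic open sets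
`B_A = {X : A ⊆ X}` for finite `A ⊆ ℕ`. -/
def ScottPN : TopologicalSpace (Set ℕ) :=
  TopologicalSpace.generateFrom
    {O : Set (Set ℕ) | ∃ A : Set ℕ, A.Finite ∧ O = {X : Set ℕ | A ⊆ X}}

/-- An ordinal is even if its canonical decomposition `λ + n`
(`λ` zero or a limit, `n < ω`) has `n` even. -/
def OrdEven (o : Ordinal) : Prop :=
  ∃ (l : Ordinal) (n : ℕ), (l = 0 ∨ Order.IsSuccLimit l) ∧ o = l + 2 * n

/-- Two ordinals have the same parity. -/
def SameParity (a b : Ordinal) : Prop := OrdEven a ↔ OrdEven b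

/-- The Hausdorff difference operation `D_α`. -/
def DOp {E : Type*} (α : Ordinal) (U : Ordinal → Set E) : Set E :=
  ⋃ β ∈ {β : Ordinal | β < α ∧ ¬ SameParity β α}, (U β \ ⋃ γ ∈ Set.Iio β, U γ)

/-- Membership in the Hausdorff difference class `D_α(E)`. -/
def MemD {E : Type*} (t : TopologicalSpace E) (α : Ordinal) (A : Set E) : Prop :=
  ∃ U : Ordinal → Set E, (∀ β < α, IsOpen[t] (U β)) ∧ A = DOp α U

/-- Scott-open sets are upward closed and admit finite approximations. -/
lemma scott_open_prop {O : Set (Set ℕ)} (h : IsOpen[ScottPN] O) :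
    (∀ X ∈ O, ∀ Y : Set ℕ, X ⊆ Y → Y ∈ O) ∧
    (∀ X ∈ O, ∃ F : Set ℕ, F.Finite ∧ F ⊆ X ∧ F ∈ O) := by
  have h' : TopologicalSpace.GenerateOpen
      {O : Set (Set ℕ) | ∃ A : Set ℕ, A.Finite ∧ O = {X : Set ℕ | A ⊆ X}} O := h
  induction h' with
  | basic O hO =>
    obtain ⟨A, hA, rfl⟩ := hO
    exact ⟨fun X hX Y hXY => hX.trans hXY, fun X hX => ⟨A, hA, hX, fun x hx => hx⟩⟩
  | univ =>
    exact ⟨fun X _ Y _ => trivial, fun X _ => ⟨∅, Set.finite_empty, Set.empty_subset X, trivial⟩⟩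
  | inter O1 O2 h1 h2 ih1 ih2 =>
    refine ⟨fun X hX Y hXY => ⟨(ih1 h1).1 X hX.1 Y hXY, (ih2 h2).1 X hX.2 Y hXY⟩, fun X hX => ?_⟩
    obtain ⟨F1, hF1, hF1X, hF1O⟩ := (ih1 h1).2 X hX.1
    obtain ⟨F2, hF2, hF2X, hF2O⟩ := (ih2 h2).2 X hX.2
    exact ⟨F1 ∪ F2, hF1.union hF2, Set.union_subset hF1X hF2X,
      (ih1 h1).1 F1 hF1O _ Set.subset_union_left, (ih2 h2).1 F2 hF2O _ Set.subset_union_right⟩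
  | sUnion S hS ih =>
    refine ⟨fun X hX Y hXY => ?_, fun X hX => ?_⟩
    · obtain ⟨O, hO, hXO⟩ := hX
      exact ⟨O, hO, (ih O hO (hS O hO)).1 X hXO Y hXY⟩
    · obtain ⟨O, hO, hXO⟩ := hX
      obtain ⟨F, hF, hFX, hFO⟩ := (ih O hO (hS O hO)).2 X hXO
      exact ⟨F, hF, hFX, O, hO, hFO⟩

/-- Wadge's Duality theorem fails in the Scott domain `𝒫(ℕ)`:
with `𝒳 = {X | 0 ∈ X}` and `𝒴 = {X | X finite}`, neither is `𝒴`
Wadge reducible to the complement of `𝒳`, nor `𝒳` to `𝒴`. -/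
theorem duality_fails_in_ScottPN :
    (¬ ∃ f : Set ℕ → Set ℕ, Continuous[ScottPN, ScottPN] f ∧
      {X : Set ℕ | X.Finite} = f ⁻¹' ({X : Set ℕ | 0 ∈ X}ᶜ)) ∧
    (¬ ∃ g : Set ℕ → Set ℕ, Continuous[ScottPN, ScottPN] g ∧
      {X : Set ℕ | 0 ∈ X} = g ⁻¹' {X : Set ℕ | X.Finite}) := by
  have hXopen : IsOpen[ScottPN] {X : Set ℕ | 0 ∈ X} := by
    apply TopologicalSpace.GenerateOpen.basic
    exact ⟨{0}, Set.finite_singleton 0, by ext X; simp [Set.singleton_subset_iff]⟩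
  constructor
  · rintro ⟨f, hf, hfeq⟩
    -- f ⁻¹' 𝒳 is open, and equals {X | ¬ X.Finite}
    have hopen := @Continuous.isOpen_preimage _ _ ScottPN ScottPN _ hf _ hXopen
    have heq : f ⁻¹' {X : Set ℕ | 0 ∈ X} = {X : Set ℕ | ¬ X.Finite} := by
      have := congrArg compl hfeq
      simpa [Set.preimage_compl, compl_compl, Set.compl_setOf] using this.symm
    rw [heq] at hopen
    have huniv : (Set.univ : Set ℕ) ∈ {X : Set ℕ | ¬ X.Finite} := Set.infinite_univ
    obtain ⟨F, hF, _, hFO⟩ := (scott_open_prop hopen).2 _ huniv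
    exact hFO hF
  · rintro ⟨g, hg, hgeq⟩
    -- g is monotone
    have hmono : ∀ X Y : Set ℕ, X ⊆ Y → g X ⊆ g Y := by
      intro X Y hXY n hn
      have hbasic : IsOpen[ScottPN] {Z : Set ℕ | {n} ⊆ Z} :=
        TopologicalSpace.GenerateOpen.basic _ ⟨{n}, Set.finite_singleton n, rfl⟩
      have hopen := @Continuous.isOpen_preimage _ _ ScottPN ScottPN _ hg _ hbasic
      have hX : X ∈ g ⁻¹' {Z : Set ℕ | {n} ⊆ Z} := by
        simp [Set.singleton_subset_iff, hn]
      have := (scott_open_prop hopen).1 X hX Y hXY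
      simpa [Set.singleton_subset_iff] using this
    have huniv : g Set.univ ∈ {X : Set ℕ | X.Finite} := by
      have : (Set.univ : Set ℕ) ∈ {X : Set ℕ | 0 ∈ X} := trivial
      rw [hgeq] at this; exact this
    have hco : g ({0}ᶜ : Set ℕ) ∉ {X : Set ℕ | X.Finite} := by
      have : ({0}ᶜ : Set ℕ) ∉ {X : Set ℕ | 0 ∈ X} := by simp
      rw [hgeq] at this; exact this
    exact hco (huniv.subset (hmono _ _ (Set.subset_univ _)))
end

section
/- In the Scott domain 𝒫(ℕ), Wadge reducibility, finite-to-one Wadge reducibility and one-to-one Wadge reducibility are pairwise inequivalent. Concretely, let 𝒪₁ = {X ⊆ ℕ : X ≠ ∅}, 𝒪₂ = {X ⊆ ℕ : ∃ n > 0, n ∈ X} and 𝒪₃ = {X ⊆ ℕ : 0 ∈ X and ∃ n > 0, n ∈ X}. Then: (a) there is a finite-to-one continuous f : 𝒫(ℕ) → 𝒫(ℕ) with 𝒪₂ = f⁻¹(𝒪₁), but no injective continuous map reduces 𝒪₂ to 𝒪₁; (b) there are continuous maps reducing 𝒪₃ to 𝒪₁ and reducing 𝒪₃ to 𝒪₂,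 but no finite-to-one continuous map reduces 𝒪₃ to 𝒪₁ and no finite-to-one continuous map reduces 𝒪₃ to 𝒪₂. -/
open Topology

lemma scott_cont (f : Set ℕ → Set ℕ)
    (h : ∀ A : Set ℕ, A.Finite → IsOpen[ScottPN] (f ⁻¹' {X | A ⊆ X})) :
    Continuous[ScottPN, ScottPN] f := by
  rw [ScottPN, continuous_generateFrom_iff]
  rintro s ⟨A, hA, rfl⟩
  exact h A hA

lemma scott_basic (A : Set ℕ) (hA : A.Finite) : IsOpen[ScottPN] {X : Set ℕ | A ⊆ X} :=
  TopologicalSpace.GenerateOpen.basic _ ⟨A, hA, rfl⟩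

/-- In the Scott domain `𝒫(ℕ)`, Wadge reducibility, finite-to-one Wadge
reducibility and one-to-one Wadge reducibility are pairwise inequivalent,
as witnessed by `𝒪₁ = {X | X ≠ ∅}`, `𝒪₂ = {X | ∃ n > 0, n ∈ X}` and
`𝒪₃ = {X | 0 ∈ X ∧ ∃ n > 0, n ∈ X}`. -/
theorem wadge_one_one_finite_one_inequivalent :
    -- (a) a finite-to-one continuous reduction of 𝒪₂ to 𝒪₁ ...
    (∃ f : Set ℕ → Set ℕ, Continuous[ScottPN, ScottPN] f ∧
        (∀ Y : Set ℕ, (f ⁻¹' {Y}).Finite) ∧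
        {X : Set ℕ | ∃ n > 0, n ∈ X} = f ⁻¹' {X : Set ℕ | X.Nonempty}) ∧
    -- ... but no injective continuous reduction of 𝒪₂ to 𝒪₁;
    (¬ ∃ f : Set ℕ → Set ℕ, Continuous[ScottPN, ScottPN] f ∧
        Function.Injective f ∧
        {X : Set ℕ | ∃ n > 0, n ∈ X} = f ⁻¹' {X : Set ℕ | X.Nonempty}) ∧
    -- (b) continuous reductions of 𝒪₃ to 𝒪₁ and to 𝒪₂ ...
    (∃ f : Set ℕ → Set ℕ, Continuous[ScottPN, ScottPN] f ∧
        {X : Set ℕ | 0 ∈ X ∧ ∃ n > 0, n ∈ X} = f ⁻¹' {X : Set ℕ | X.Nonempty}) ∧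
    (∃ f : Set ℕ → Set ℕ, Continuous[ScottPN, ScottPN] f ∧
        {X : Set ℕ | 0 ∈ X ∧ ∃ n > 0, n ∈ X} = f ⁻¹' {X : Set ℕ | ∃ n > 0, n ∈ X}) ∧
    -- ... but no finite-to-one continuous reduction of 𝒪₃ to 𝒪₁ nor to 𝒪₂.
    (¬ ∃ f : Set ℕ → Set ℕ, Continuous[ScottPN, ScottPN] f ∧
        (∀ Y : Set ℕ, (f ⁻¹' {Y}).Finite) ∧
        {X : Set ℕ | 0 ∈ X ∧ ∃ n > 0, n ∈ X} = f ⁻¹' {X : Set ℕ | X.Nonempty}) ∧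
    (¬ ∃ f : Set ℕ → Set ℕ, Continuous[ScottPN, ScottPN] f ∧
        (∀ Y : Set ℕ, (f ⁻¹' {Y}).Finite) ∧
        {X : Set ℕ | 0 ∈ X ∧ ∃ n > 0, n ∈ X} = f ⁻¹' {X : Set ℕ | ∃ n > 0, n ∈ X}) := by
  refine ⟨?_, ?_, ?_, ?_, ?_, ?_⟩
  · -- f(X) = X \ {0}
    refine ⟨fun X => X \ {0}, ?_, ?_, ?_⟩
    · apply scott_cont
      intro A hA
      by_cases h0 : 0 ∈ A
      · convert (@isOpen_empty _ ScottPN)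
        ext X
        simp only [Set.mem_preimage, Set.mem_setOf_eq, Set.mem_empty_iff_false, iff_false]
        intro hsub
        exact (hsub h0).2 rfl
      · convert scott_basic A hA using 1
        ext X
        constructor
        · intro h a ha; exact (h ha).1
        · intro h a ha; exact ⟨h ha, fun he => h0 (he ▸ ha)⟩
    · intro Y
      apply Set.Finite.subset ((Set.finite_singleton (insert 0 Y)).insert Y)
      intro X hX
      simp only [Set.mem_preimage, Set.mem_singleton_iff] at hX
      simp only [Set.mem_insert_iff, Set.mem_singleton_iff]
      by_cases h0 : 0 ∈ X
      · right
        ext a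
        rcases Nat.eq_zero_or_pos a with rfl | ha
        · simp [h0]
        · simp only [Set.mem_insert_iff, ← hX, Set.mem_diff, Set.mem_singleton_iff]
          constructor
          · intro h; exact Or.inr ⟨h, ha.ne'⟩
          · rintro (h | h); · omega
            · exact h.1
      · left
        rw [← hX]
        ext a
        simp only [Set.mem_diff, Set.mem_singleton_iff]
        constructor
        · intro ha; exact ⟨ha, fun he => h0 (he ▸ ha)⟩
        · exact fun h => h.1
    · ext X
      simp only [Set.mem_setOf_eq, Set.mem_preimage, Set.Nonempty]
      constructor
      · rintro ⟨n, hn, hnX⟩; exact ⟨n, hnX, hn.ne'⟩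
      · rintro ⟨n, hnX, hn⟩; exact ⟨n, Nat.pos_of_ne_zero hn, hnX⟩
  · rintro ⟨f, -, hinj, hred⟩
    have h1 : f ∅ = ∅ := by
      by_contra h
      have : (∅ : Set ℕ) ∈ {X : Set ℕ | ∃ n > 0, n ∈ X} := by
        rw [hred]; exact Set.nonempty_iff_ne_empty.mpr h
      obtain ⟨n, -, hn⟩ := this; exact hn
    have h2 : f {0} = ∅ := by
      by_contra h
      have : ({0} : Set ℕ) ∈ {X : Set ℕ | ∃ n > 0, n ∈ X} := by
        rw [hred]; exact Set.nonempty_iff_ne_empty.mpr h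
      obtain ⟨n, hn, hn0⟩ := this
      exact absurd (Set.mem_singleton_iff.mp hn0) hn.ne'
    have := hinj (h1.trans h2.symm)
    exact absurd this.symm (by simp [Set.ext_iff])
  · refine ⟨fun X => {m | 0 < m ∧ 0 ∈ X ∧ m ∈ X}, ?_, ?_⟩
    · apply scott_cont
      intro A hA
      by_cases hne : A = ∅
      · subst hne
        convert (@isOpen_univ _ ScottPN)
        ext X; simp
      · by_cases h0 : 0 ∈ A
        · convert (@isOpen_empty _ ScottPN)
          ext X
          simp only [Set.mem_preimage, Set.mem_setOf_eq, Set.mem_empty_iff_false, iff_false]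
          intro hsub
          exact absurd (hsub h0).1 (lt_irrefl 0)
        · convert scott_basic (insert 0 A) (hA.insert 0) using 1
          ext X
          simp only [Set.mem_preimage, Set.mem_setOf_eq, Set.insert_subset_iff]
          constructor
          · intro h
            obtain ⟨a, ha⟩ := Set.nonempty_iff_ne_empty.mpr hne
            exact ⟨(h ha).2.1, fun b hb => (h hb).2.2⟩
          · rintro ⟨h0X, hAX⟩ a ha
            exact ⟨Nat.pos_of_ne_zero fun he => h0 (he ▸ ha), h0X, hAX ha⟩
    · ext X
      simp only [Set.mem_setOf_eq, Set.mem_preimage, Set.Nonempty]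
      constructor
      · rintro ⟨h0, n, hn, hnX⟩; exact ⟨n, hn, h0, hnX⟩
      · rintro ⟨n, hn, h0, hnX⟩; exact ⟨h0, n, hn, hnX⟩
  · refine ⟨fun X => {m | 0 < m ∧ 0 ∈ X ∧ m ∈ X}, ?_, ?_⟩
    · apply scott_cont
      intro A hA
      by_cases hne : A = ∅
      · subst hne
        convert (@isOpen_univ _ ScottPN)
        ext X; simp
      · by_cases h0 : 0 ∈ A
        · convert (@isOpen_empty _ ScottPN)
          ext X
          simp only [Set.mem_preimage, Set.mem_setOf_eq, Set.mem_empty_iff_false, iff_false]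
          intro hsub
          exact absurd (hsub h0).1 (lt_irrefl 0)
        · convert scott_basic (insert 0 A) (hA.insert 0) using 1
          ext X
          simp only [Set.mem_preimage, Set.mem_setOf_eq, Set.insert_subset_iff]
          constructor
          · intro h
            obtain ⟨a, ha⟩ := Set.nonempty_iff_ne_empty.mpr hne
            exact ⟨(h ha).2.1, fun b hb => (h hb).2.2⟩
          · rintro ⟨h0X, hAX⟩ a ha
            exact ⟨Nat.pos_of_ne_zero fun he => h0 (he ▸ ha), h0X, hAX ha⟩
    · ext X
      simp only [Set.mem_setOf_eq, Set.mem_preimage]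
      constructor
      · rintro ⟨h0, n, hn, hnX⟩; exact ⟨n, hn, hn, h0, hnX⟩
      · rintro ⟨n, hn, -, h0, hnX⟩; exact ⟨h0, n, hn, hnX⟩
  · rintro ⟨f, -, hfin, hred⟩
    have key : ∀ n : ℕ, f {n + 1} = ∅ := by
      intro n
      by_contra h
      have : ({n + 1} : Set ℕ) ∈ {X : Set ℕ | 0 ∈ X ∧ ∃ m > 0, m ∈ X} := by
        rw [hred]; exact Set.nonempty_iff_ne_empty.mpr h
      exact absurd this.1 (by simp)
    have hinf : (f ⁻¹' {∅}).Infinite := by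
      apply Set.infinite_of_injective_forall_mem
        (f := fun n : ℕ => ({n + 1} : Set ℕ))
      · intro a b hab
        simpa using Set.singleton_eq_singleton_iff.mp hab
      · intro n; exact key n
    exact hinf (hfin ∅)
  · rintro ⟨f, -, hfin, hred⟩
    have key : ∀ n : ℕ, f {n + 1} = ∅ ∨ f {n + 1} = {0} := by
      intro n
      have hn : ({n + 1} : Set ℕ) ∉ {X : Set ℕ | 0 ∈ X ∧ ∃ m > 0, m ∈ X} := by
        intro h; exact absurd h.1 (by simp)
      rw [hred] at hn
      simp only [Set.mem_preimage, Set.mem_setOf_eq, not_exists] at hn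
      by_cases he : f {n + 1} = ∅
      · exact Or.inl he
      · right
        obtain ⟨a, ha⟩ := Set.nonempty_iff_ne_empty.mpr he
        ext b
        simp only [Set.mem_singleton_iff]
        constructor
        · intro hb
          by_contra hb0
          exact hn b ⟨Nat.pos_of_ne_zero hb0, hb⟩
        · rintro rfl
          rcases Nat.eq_zero_or_pos a with rfl | hap
          · exact ha
          · exact absurd ⟨hap, ha⟩ (hn a)
    have hinf : (f ⁻¹' {∅} ∪ f ⁻¹' {{0}}).Infinite := by
      apply Set.infinite_of_injective_forall_mem
        (f := fun n : ℕ => ({n + 1} : Set ℕ))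
      · intro a b hab
        simpa using Set.singleton_eq_singleton_iff.mp hab
      · intro n
        rcases key n with h | h
        · exact Or.inl h
        · exact Or.inr h
    exact hinf (((hfin ∅).union (hfin {0})))
end

section
/- For every ordinal α with 1 ≤ α < ω₁ there exist a family 𝒜 ∈ D_α(𝒫(ℕ)) and an 𝒜-special chain (X_β)_{β≤α} of subsets of ℕ such that X_α is an infinite subset of ℕ and X_β ∖ X_{β+1} is an infinite subset of ℕ for every β < α. -/
open Topology

/-- A decreasing `A`-alternating chain of length `α+1` in `𝒫(ℕ)`. -/
def AltChain (A : Set (Set ℕ)) (α : Ordinal) (X : Ordinal → Set ℕ) : Prop :=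
  (∀ β δ : Ordinal, β < δ → δ ≤ α → X δ ⊂ X β) ∧
  (∀ β ≤ α, X β ∈ A ↔ ¬ SameParity β α)

/-- An `A`-special `(α+1)`-chain in `𝒫(ℕ)`. -/
def SpecialChain (A : Set (Set ℕ)) (α : Ordinal) (X : Ordinal → Set ℕ) : Prop :=
  AltChain A α X ∧
  (∀ β < α, ∀ Y : Set ℕ, Y ⊆ X β → X (β + 1) ⊂ Y → (Y ∈ A ↔ ¬ SameParity β α)) ∧
  (∀ Y : Set ℕ, Y ⊆ X α → Y ∉ A)

/-- Main construction, given a "coloring" `c : ℕ → Ordinal` taking each value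
`δ ≤ α` infinitely often (and no other values). -/
theorem exists_special_chain_aux
    (α : Ordinal) (h1 : 1 ≤ α) (c : ℕ → Ordinal)
    (hc1 : ∀ n, c n ≤ α) (hc2 : ∀ δ ≤ α, {n | c n = δ}.Infinite) :
    ∃ (A : Set (Set ℕ)) (X : Ordinal → Set ℕ),
      MemD ScottPN α A ∧ SpecialChain A α X ∧
      (X α).Infinite ∧ (∀ β < α, (X β \ X (β + 1)).Infinite) := by
  classical
  set X : Ordinal → Set ℕ := fun β => {n | β ≤ c n} with hX
  set A : Set (Set ℕ) :=
    {Y | ∃ β, β < α ∧ ¬ SameParity β α ∧ Y ⊆ X β ∧ ¬ Y ⊆ X (β + 1)} with hA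
  set U : Ordinal → Set (Set ℕ) := fun β => {Y | ¬ Y ⊆ X (β + 1)} with hU
  -- monotonicity
  have hXmono : ∀ {β δ : Ordinal}, β ≤ δ → X δ ⊆ X β := by
    intro β δ h n hn; exact h.trans hn
  have hXstrict : ∀ {β δ : Ordinal}, β < δ → δ ≤ α → X δ ⊂ X β := by
    intro β δ hβδ hδα
    refine ⟨hXmono hβδ.le, ?_⟩
    obtain ⟨n, hn⟩ := (hc2 β (hβδ.le.trans hδα)).nonempty
    intro hsub
    have h1 : n ∈ X β := le_of_eq hn.symm
    have h2 : δ ≤ c n := hsub h1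
    rw [hn] at h2
    exact absurd h2 (not_le.mpr hβδ)
  -- the key equivalence: `Y ⊆ X β ↔ ∀ γ < β, Y ⊆ X (γ+1)`
  have hkey : ∀ (β : Ordinal) (Y : Set ℕ), (∀ γ < β, Y ⊆ X (γ + 1)) ↔ Y ⊆ X β := by
    intro β Y
    constructor
    · intro h n hn
      by_contra hlt
      have hlt' : c n < β := not_le.mp hlt
      have := h (c n) hlt' hn
      have : c n + 1 ≤ c n := this
      exact absurd this (by simp [Order.add_one_le_iff])
    · intro h γ hγ n hn
      exact hXmono (Order.add_one_le_iff.mpr hγ) (h hn)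
  -- subsets of X α are never in A
  have hbelow : ∀ Y : Set ℕ, Y ⊆ X α → Y ∉ A := by
    rintro Y hY ⟨β, hβα, _, _, hns⟩
    exact hns (hY.trans (hXmono (Order.add_one_le_iff.mpr hβα)))
  -- uniqueness of the witness for elements strictly between X (β+1) and X β
  have huniq : ∀ (β β' : Ordinal) (Y : Set ℕ), Y ⊆ X β → ¬ Y ⊆ X (β + 1) →
      Y ⊆ X β' → ¬ Y ⊆ X (β' + 1) → β' = β := by
    intro β β' Y hs hns hs' hns'
    rcases lt_trichotomy β' β with h | h | h
    · exact absurd (hs.trans (hXmono (Order.add_one_le_iff.mpr h))) hns'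
    · exact h
    · exact absurd (hs'.trans (hXmono (Order.add_one_le_iff.mpr h))) hns
  refine ⟨A, X, ?_, ⟨⟨fun β δ hβδ hδα => hXstrict hβδ hδα, ?_⟩, ?_, hbelow⟩, ?_, ?_⟩
  · -- MemD
    refine ⟨U, ?_, ?_⟩
    · intro β _
      letI := ScottPN
      have hrw : U β = ⋃ n ∈ (X (β + 1))ᶜ, {Y : Set ℕ | {n} ⊆ Y} := by
        ext Y
        simp only [hU, Set.mem_setOf_eq, Set.not_subset, Set.mem_iUnion, Set.mem_compl_iff,
          Set.singleton_subset_iff]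
        exact ⟨fun ⟨n, h1, h2⟩ => ⟨n, h2, h1⟩, fun ⟨n, h1, h2⟩ => ⟨n, h2, h1⟩⟩
      rw [hrw]
      exact isOpen_biUnion fun n _ =>
        TopologicalSpace.isOpen_generateFrom_of_mem ⟨{n}, Set.finite_singleton n, rfl⟩
    · -- A = DOp α U
      ext Y
      simp only [hA, DOp, Set.mem_setOf_eq, Set.mem_iUnion, Set.mem_diff, Set.mem_Iio,
        exists_prop, not_exists, not_and]
      constructor
      · rintro ⟨β, hβα, hP, hs, hns⟩
        exact ⟨β, ⟨hβα, hP⟩, hns, fun γ hγ => not_not.mpr ((hkey β Y).mpr hs γ hγ)⟩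
      · rintro ⟨β, ⟨hβα, hP⟩, hmem, hnot⟩
        exact ⟨β, hβα, hP, (hkey β Y).mp (fun γ hγ => not_not.mp (hnot γ hγ)), hmem⟩
  · -- alternating chain condition
    intro β hβα
    rcases eq_or_lt_of_le hβα with rfl | hβα
    · constructor
      · intro h; exact absurd h (hbelow _ le_rfl)
      · intro h; exact absurd Iff.rfl h
    · constructor
      · rintro ⟨β', hβ'α, hP, hs, hns⟩
        have hns0 : ¬ X β ⊆ X (β + 1) :=
          (hXstrict (lt_add_one β) (Order.add_one_le_iff.mpr hβα)).not_subset
        rw [huniq β β' (X β) subset_rfl hns0 hs hns] at hP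
        exact hP
      · intro hP
        exact ⟨β, hβα, hP, subset_rfl,
          (hXstrict (lt_add_one β) (Order.add_one_le_iff.mpr hβα)).not_subset⟩
  · -- special chain condition
    intro β hβα Y hYβ hYβ1
    constructor
    · rintro ⟨β', hβ'α, hP, hs, hns⟩
      rw [huniq β β' Y hYβ hYβ1.not_subset hs hns] at hP
      exact hP
    · intro hP
      exact ⟨β, hβα, hP, hYβ, hYβ1.not_subset⟩
  · -- X α infinite
    exact (hc2 α le_rfl).mono fun n (hn : c n = α) => le_of_eq hn.symm
  · -- differences infinite
    intro β hβα
    refine (hc2 β hβα.le).mono fun n (hn : c n = β) => ⟨le_of_eq hn.symm, ?_⟩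
    intro h
    have : β + 1 ≤ β := hn ▸ h
    exact absurd this (by simp [Order.add_one_le_iff])

/-- For every countable ordinal `α ≥ 1` there exist `𝒜 ∈ D_α(𝒫(ℕ))` and an
`𝒜`-special chain `(X_β)_{β ≤ α}` with `X_α` infinite and each
`X_β \ X_{β+1}` infinite. -/
theorem exists_special_chain_with_infinite_differences
    (α : Ordinal) (h1 : 1 ≤ α) (h2 : α.card ≤ Cardinal.aleph0) :
    ∃ (A : Set (Set ℕ)) (X : Ordinal → Set ℕ),
      MemD ScottPN α A ∧ SpecialChain A α X ∧
      (X α).Infinite ∧ (∀ β < α, (X β \ X (β + 1)).Infinite) := by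
  classical
  -- build a coloring `c : ℕ → Ordinal` taking each value `δ ≤ α` infinitely often
  have hcard : (Order.succ α).card ≤ Cardinal.aleph0 := by
    rw [Ordinal.card_succ]
    exact Cardinal.add_le_aleph0.mpr ⟨h2, Cardinal.one_le_aleph0⟩
  have hcount : Countable (Order.succ α).ToType := by
    rw [← Cardinal.mk_le_aleph0_iff, Cardinal.mk_toType]; exact hcard
  obtain ⟨g, hg⟩ := exists_injective_nat (Order.succ α).ToType
  set f : {δ : Ordinal // δ ≤ α} → ℕ := fun d =>
    g ((Ordinal.ToType.mk (o := Order.succ α)) ⟨d.1, Order.lt_succ_iff.mpr d.2⟩) with hf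
  have hfinj : Function.Injective f := by
    intro d d' h
    have h2' := (Ordinal.ToType.mk (o := Order.succ α)).injective (hg h)
    exact Subtype.ext (congrArg (fun x : Set.Iio (Order.succ α) => x.1) h2')
  set c : ℕ → Ordinal := fun n =>
    if h : ∃ d : {δ : Ordinal // δ ≤ α}, f d = n.unpair.1 then h.choose.1 else α with hc
  have hcval : ∀ (δ : Ordinal) (hδ : δ ≤ α) (k : ℕ),
      c (Nat.pair (f ⟨δ, hδ⟩) k) = δ := by
    intro δ hδ k
    have hex : ∃ d : {δ : Ordinal // δ ≤ α}, f d = (Nat.pair (f ⟨δ, hδ⟩) k).unpair.1 := by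
      refine ⟨⟨δ, hδ⟩, ?_⟩
      rw [Nat.unpair_pair]
    have h4 : (Nat.pair (f ⟨δ, hδ⟩) k).unpair.1 = f ⟨δ, hδ⟩ := by rw [Nat.unpair_pair]
    rw [hc]
    simp only [dif_pos hex]
    exact congrArg Subtype.val (hfinj (hex.choose_spec.trans h4))
  refine exists_special_chain_aux α h1 c ?_ ?_
  · intro n
    simp only [hc]
    split
    · rename_i h
      exact h.choose.2
    · exact le_rfl
  · intro δ hδ
    apply Set.infinite_of_injective_forall_mem
      (f := fun k : ℕ => Nat.pair (f ⟨δ, hδ⟩) k)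
    · intro k k' h
      have := congrArg (fun n => n.unpair.2) h
      simpa [Nat.unpair_pair] using this
    · intro k
      exact hcval δ hδ k
end

section
/- For every ordinal α, every strictly decreasing chain (X_β)_{β≤α} of subsets of ℕ (i.e. X_β ⊋ X_δ whenever β < δ ≤ α) is A-special for some A ∈ D_α(𝒫(ℕ)). -/
open Topology

lemma mem_DOp_iff {E : Type*} (α : Ordinal) (U : Ordinal → Set E) (Y : E) :
    Y ∈ DOp α U ↔ ∃ β, (β < α ∧ ¬ SameParity β α) ∧ Y ∈ U β ∧ ∀ γ < β, Y ∉ U γ := by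
  simp only [DOp, Set.mem_iUnion, Set.mem_diff, Set.mem_setOf_eq, Set.mem_Iio, exists_prop,
    not_exists, not_and]

/-- Every strictly decreasing chain `(X_β)_{β ≤ α}` of subsets of `ℕ` is
`A`-special for some `A ∈ D_α(𝒫(ℕ))`. -/
theorem strict_decreasing_chain_is_special (α : Ordinal) (X : Ordinal → Set ℕ)
    (hX : ∀ β δ : Ordinal, β < δ → δ ≤ α → X δ ⊂ X β) :
    ∃ A : Set (Set ℕ), MemD ScottPN α A ∧ SpecialChain A α X := by
  classical
  set U : Ordinal → Set (Set ℕ) := fun β => {Y | ¬ Y ⊆ X (β + 1)} with hU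
  have succ_le : ∀ {γ : Ordinal}, γ < α → γ + 1 ≤ α := by
    intro γ hγ
    rw [Ordinal.add_one_eq_succ]
    exact Order.succ_le_of_lt hγ
  have mono : ∀ {p q : Ordinal}, p ≤ q → q ≤ α → X q ⊆ X p := by
    intro p q h hq
    rcases h.eq_or_lt with rfl | h
    · exact subset_rfl
    · exact (hX p q h hq).subset
  -- key characterization lemma
  have hchar : ∀ β₀ : Ordinal, β₀ < α → ∀ Y : Set ℕ,
      (∀ γ < α, (Y ∈ U γ ↔ β₀ ≤ γ)) → (Y ∈ DOp α U ↔ ¬ SameParity β₀ α) := by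
    intro β₀ hβ₀ Y hch
    rw [mem_DOp_iff]
    constructor
    · rintro ⟨β, ⟨hβα, hpar⟩, hmem, hmin⟩
      have h1 : β₀ ≤ β := (hch β hβα).1 hmem
      rcases h1.eq_or_lt with rfl | h1
      · exact hpar
      · exact absurd ((hch β₀ hβ₀).2 le_rfl) (hmin β₀ h1)
    · intro hpar
      exact ⟨β₀, ⟨hβ₀, hpar⟩, (hch β₀ hβ₀).2 le_rfl,
        fun γ hγ h => absurd ((hch γ (hγ.trans hβ₀)).1 h) (not_le.2 hγ)⟩
  have hnot : ∀ Y : Set ℕ, Y ⊆ X α → Y ∉ DOp α U := by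
    intro Y hY hmem
    rw [mem_DOp_iff] at hmem
    obtain ⟨β, ⟨hβα, -⟩, hmem, -⟩ := hmem
    exact hmem (hY.trans (mono (succ_le hβα) le_rfl))
  refine ⟨DOp α U, ⟨U, ?_, rfl⟩, ⟨hX, ?_⟩, ?_, hnot⟩
  · -- openness
    intro β hβ
    letI := ScottPN
    have : U β = ⋃ n ∈ (X (β + 1))ᶜ, {Y : Set ℕ | {n} ⊆ Y} := by
      ext Y
      simp only [Set.mem_iUnion, Set.mem_setOf_eq, Set.mem_compl_iff, hU,
        Set.singleton_subset_iff, Set.not_subset, exists_prop]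
      tauto
    rw [show IsOpen[ScottPN] (U β) ↔ IsOpen (U β) from Iff.rfl, this]
    exact isOpen_biUnion fun n _ =>
      TopologicalSpace.isOpen_generateFrom_of_mem ⟨{n}, Set.finite_singleton n, rfl⟩
  · -- alternating condition on the chain itself
    intro β hβ
    rcases hβ.eq_or_lt with heq | hβ
    · subst heq
      have h1 : X β ∉ DOp β U := hnot (X β) subset_rfl
      have h2 : SameParity β β := Iff.rfl
      simp [h1, h2]
    · refine hchar β hβ (X β) ?_
      intro γ hγ
      constructor
      · intro h
        by_contra hle
        push_neg at hle
        have : γ + 1 ≤ β := by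
          rw [Ordinal.add_one_eq_succ]; exact Order.succ_le_of_lt hle
        exact h (mono this hβ.le)
      · intro h
        have hlt : β < γ + 1 := by
          rw [Ordinal.add_one_eq_succ]; exact Order.lt_succ_of_le h
        exact (hX β (γ + 1) hlt (succ_le hγ)).not_subset
  · -- special condition on intermediate sets
    intro β hβ Y hY1 hY2
    refine hchar β hβ Y ?_
    intro γ hγ
    constructor
    · intro h
      by_contra hle
      push_neg at hle
      have : γ + 1 ≤ β := by
        rw [Ordinal.add_one_eq_succ]; exact Order.succ_le_of_lt hle
      exact h (hY1.trans (mono this hβ.le))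
    · intro h hsub
      have : β + 1 ≤ γ + 1 := add_le_add_left h 1
      exact hY2.not_subset (hsub.trans (mono this (succ_le hγ)))
end

section
/- For every ordinal α with 1 ≤ α < ω₁ there exists a Wadge complete set for D_α(𝒫(ℕ)): a family H ∈ D_α(𝒫(ℕ)) such that every member of D_α(𝒫(ℕ)) is Wadge reducible to H. -/
open Topology

/-- Wadge reducibility between families of subsets of ℕ (Scott topology). -/
def WadgeLe (A B : Set (Set ℕ)) : Prop :=
  ∃ f : Set ℕ → Set ℕ, Continuous[ScottPN, ScottPN] f ∧ A = f ⁻¹' B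

lemma scott_basic_open (F : Finset ℕ) : IsOpen[ScottPN] {X : Set ℕ | ↑F ⊆ X} :=
  TopologicalSpace.isOpen_generateFrom_of_mem ⟨↑F, F.finite_toSet, rfl⟩

lemma scott_open_sub {U : Set (Set ℕ)}
    (hU : TopologicalSpace.GenerateOpen
      {O : Set (Set ℕ) | ∃ A : Set ℕ, A.Finite ∧ O = {X : Set ℕ | A ⊆ X}} U) :
    ∀ X ∈ U, ∃ F : Finset ℕ, {Y : Set ℕ | ↑F ⊆ Y} ⊆ U ∧ ↑F ⊆ X := by
  induction hU with
  | basic O hO =>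
    obtain ⟨A, hA, rfl⟩ := hO
    intro X hX
    exact ⟨hA.toFinset, by simp [hA.coe_toFinset], by simpa [hA.coe_toFinset] using hX⟩
  | univ => exact fun X _ => ⟨∅, by simp⟩
  | inter U V hU hV ihU ihV =>
    intro X hX
    obtain ⟨F1, h1, h1X⟩ := ihU X hX.1
    obtain ⟨F2, h2, h2X⟩ := ihV X hX.2
    refine ⟨F1 ∪ F2, fun Y hY => ⟨h1 ?_, h2 ?_⟩, ?_⟩
    · exact fun a ha => hY (by simp [Finset.mem_union]; exact Or.inl ha)
    · exact fun a ha => hY (by simp [Finset.mem_union]; exact Or.inr ha)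
    · intro a ha
      simp only [Finset.coe_union, Set.mem_union] at ha
      exact ha.elim (fun h => h1X h) (fun h => h2X h)
  | sUnion S hS ih =>
    intro X hX
    obtain ⟨t, htS, hXt⟩ := hX
    obtain ⟨F, hF, hFX⟩ := ih t htS X hXt
    exact ⟨F, hF.trans (Set.subset_sUnion_of_mem htS), hFX⟩

lemma scott_mem_iff {U : Set (Set ℕ)} (hU : IsOpen[ScottPN] U) (X : Set ℕ) :
    X ∈ U ↔ ∃ F : Finset ℕ, {Y : Set ℕ | ↑F ⊆ Y} ⊆ U ∧ ↑F ⊆ X := by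
  constructor
  · exact fun hX => scott_open_sub hU X hX
  · rintro ⟨F, hF, hFX⟩
    exact hF hFX

/-- For every countable ordinal `α ≥ 1` there exists a Wadge complete set for
`D_α(𝒫(ℕ))`. -/
theorem exists_wadge_complete_for_D
    (α : Ordinal) (h1 : 1 ≤ α) (h2 : α.card ≤ Cardinal.aleph0) :
    ∃ H : Set (Set ℕ), MemD ScottPN α H ∧
      ∀ A : Set (Set ℕ), MemD ScottPN α A → WadgeLe A H := by
  -- an injection from ordinals below α into ℕ
  letI : TopologicalSpace (Set ℕ) := ScottPN
  haveI hcnt : Countable (Set.Iio α) := by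
    rw [← Cardinal.mk_le_aleph0_iff, Ordinal.mk_Iio_ordinal]
    simpa using Cardinal.lift_le.mpr h2
  obtain ⟨i, hi⟩ := exists_injective_nat (Set.Iio α)
  set j : Ordinal → ℕ := fun β => if h : β < α then i ⟨β, h⟩ else 0 with hj_def
  have hj : ∀ β γ, β < α → γ < α → j β = j γ → β = γ := by
    intro β γ hβ hγ h
    simp only [hj_def, dif_pos hβ, dif_pos hγ] at h
    exact congrArg Subtype.val (hi h)
  -- the universal open sets
  set V : Ordinal → Set (Set ℕ) := fun β => {X : Set ℕ | ∃ k : ℕ, Nat.pair (j β) k ∈ X}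
    with hV_def
  have hVopen : ∀ β, IsOpen[ScottPN] (V β) := by
    intro β
    have : V β = ⋃ k : ℕ, {X : Set ℕ | ↑({Nat.pair (j β) k} : Finset ℕ) ⊆ X} := by
      ext X
      simp [hV_def, Set.singleton_subset_iff]
    rw [this]
    exact isOpen_iUnion fun k => scott_basic_open _
  refine ⟨DOp α V, ⟨V, fun β _ => hVopen β, rfl⟩, ?_⟩
  rintro A ⟨U, hUopen, rfl⟩
  set f : Set ℕ → Set ℕ := fun X =>
    {n : ℕ | ∃ β, β < α ∧ ∃ F : Finset ℕ, {Y : Set ℕ | ↑F ⊆ Y} ⊆ U β ∧ ↑F ⊆ X ∧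
      n = Nat.pair (j β) (Encodable.encode F)} with hf_def
  have claim1 : ∀ β, β < α → f ⁻¹' (V β) = U β := by
    intro β hβ
    ext X
    constructor
    · rintro ⟨k, hk⟩
      obtain ⟨β', hβ', F, hsub, hFX, heq⟩ := hk
      obtain ⟨hj', -⟩ := Nat.pair_eq_pair.mp heq
      have : β = β' := hj β β' hβ hβ' hj'
      exact this ▸ hsub hFX
    · intro hX
      obtain ⟨F, hF, hFX⟩ := (scott_mem_iff (hUopen β hβ) X).mp hX
      exact ⟨Encodable.encode F, β, hβ, F, hF, hFX, rfl⟩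
  have hfc : Continuous[ScottPN, ScottPN] f := by
    apply continuous_generateFrom_iff.mpr
    rintro O ⟨A, hA, rfl⟩
    have : f ⁻¹' {X : Set ℕ | A ⊆ X} = ⋂ a ∈ A, {X : Set ℕ | a ∈ f X} := by
      ext X; simp [Set.subset_def]
    rw [this]
    refine hA.isOpen_biInter fun a _ => ?_
    have : {X : Set ℕ | a ∈ f X} =
        ⋃ β, ⋃ (_ : β < α), ⋃ F : Finset ℕ,
          ⋃ (_ : {Y : Set ℕ | ↑F ⊆ Y} ⊆ U β ∧ a = Nat.pair (j β) (Encodable.encode F)),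
            {X : Set ℕ | ↑F ⊆ X} := by
      ext X
      simp only [Set.mem_iUnion, Set.mem_setOf_eq, hf_def]
      constructor
      · rintro ⟨β, hβ, F, hsub, hFX, heq⟩
        exact ⟨β, hβ, F, ⟨hsub, heq⟩, hFX⟩
      · rintro ⟨β, hβ, F, ⟨hsub, heq⟩, hFX⟩
        exact ⟨β, hβ, F, hsub, hFX, heq⟩
    rw [this]
    exact isOpen_iUnion fun β => isOpen_iUnion fun _ => isOpen_iUnion fun F =>
      isOpen_iUnion fun _ => scott_basic_open F
  refine ⟨f, hfc, ?_⟩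
  ext X
  simp only [DOp, Set.mem_preimage, Set.mem_iUnion, Set.mem_diff, Set.mem_setOf_eq,
    exists_prop, Set.mem_Iio]
  have c : ∀ γ, γ < α → (f X ∈ V γ ↔ X ∈ U γ) := fun γ h => by
    rw [← claim1 γ h]; exact Iff.rfl
  constructor
  · rintro ⟨β, ⟨hβ, hpar⟩, hXU, hXnot⟩
    refine ⟨β, ⟨hβ, hpar⟩, (c β hβ).mpr hXU, ?_⟩
    rintro ⟨γ, hγ, hm⟩
    exact hXnot ⟨γ, hγ, (c γ (hγ.trans hβ)).mp hm⟩
  · rintro ⟨β, ⟨hβ, hpar⟩, hXU, hXnot⟩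
    refine ⟨β, ⟨hβ, hpar⟩, (c β hβ).mp hXU, ?_⟩
    rintro ⟨γ, hγ, hm⟩
    exact hXnot ⟨γ, hγ, (c γ (hγ.trans hβ)).mpr hm⟩
end

section
/- Let (X_β)_{β≤α} be a strictly decreasing chain of subsets of ℕ. Then the chain is scattered if and only if X_α is infinite and X_β ∖ X_{β+1} is infinite for every β < α. Moreover, if the chain is 𝒜-special for some 𝒜 ⊆ 𝒫(ℕ), then these conditions are also equivalent to the chain being 𝒜-scattered. -/
open Topology

/-- A chain `(X_β)_{β ≤ α}` in `𝒫(ℕ)` is scattered. -/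
def Scattered (α : Ordinal) (X : Ordinal → Set ℕ) : Prop :=
  ∃ θ : Ordinal → Set ℕ → Set ℕ,
    (∀ β ≤ α, Continuous[ScottPN, ScottPN] (θ β) ∧ Function.Injective (θ β)) ∧
    (∀ Z : Set ℕ, θ α Z ⊆ X α) ∧
    (∀ β < α, ∀ Z : Set ℕ, X (β + 1) ⊂ θ β Z ∧ θ β Z ⊆ X β)

/-- A chain `(X_β)_{β ≤ α}` in `𝒫(ℕ)` is `A`-scattered. -/
def AScattered (A : Set (Set ℕ)) (α : Ordinal) (X : Ordinal → Set ℕ) : Prop :=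
  ∃ θ : Ordinal → Set ℕ → Set ℕ,
    (∀ β ≤ α, Continuous[ScottPN, ScottPN] (θ β) ∧ Function.Injective (θ β)) ∧
    (∀ Z : Set ℕ, θ α Z ⊆ X α) ∧
    (∀ β < α, ∀ Z : Set ℕ, X (β + 1) ⊂ θ β Z ∧ θ β Z ⊆ X β) ∧
    (∀ β ≤ α, ∀ Z : Set ℕ, θ β Z ∈ A ↔ ¬ SameParity β α)


section Aux

theorem aux_cont_inj (C : Set ℕ) (h : ℕ → ℕ) (hinj : Function.Injective h)
    (hdisj : ∀ n, h n ∉ C) :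
    Continuous[ScottPN, ScottPN] (fun Z => C ∪ h '' Z) ∧
    Function.Injective (fun Z => C ∪ h '' Z) := by
  constructor
  · apply continuous_generateFrom_iff.mpr
    rintro s ⟨A, hAfin, rfl⟩
    by_cases hc : A ⊆ C ∪ Set.range h
    · have he : (fun Z => C ∪ h '' Z) ⁻¹' {X : Set ℕ | A ⊆ X} = {Z | h ⁻¹' (A \ C) ⊆ Z} := by
        ext Z
        simp only [Set.mem_preimage, Set.mem_setOf_eq]
        constructor
        · intro hA n hn
          rcases hA hn.1 with hC | ⟨m, hm, hmn⟩
          · exact absurd hC hn.2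
          · exact (hinj hmn) ▸ hm
        · intro hZ a ha
          rcases hc ha with hC | ⟨m, rfl⟩
          · exact Or.inl hC
          · by_cases hmC : h m ∈ C
            · exact Or.inl hmC
            · exact Or.inr ⟨m, hZ ⟨ha, hmC⟩, rfl⟩
      rw [he]
      exact TopologicalSpace.isOpen_generateFrom_of_mem
        ⟨h ⁻¹' (A \ C), Set.Finite.preimage hinj.injOn hAfin.diff, rfl⟩
    · have he : (fun Z => C ∪ h '' Z) ⁻¹' {X : Set ℕ | A ⊆ X} = ∅ := by
        ext Z
        simp only [Set.mem_preimage, Set.mem_setOf_eq, Set.mem_empty_iff_false, iff_false]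
        intro hA
        exact hc (hA.trans (Set.union_subset_union_right C (Set.image_subset_range h Z)))
      rw [he]
      exact @isOpen_empty _ ScottPN
  · intro Z1 Z2 hZ
    simp only at hZ
    ext n
    constructor
    · intro hn
      have : h n ∈ C ∪ h '' Z2 := hZ ▸ Or.inr ⟨n, hn, rfl⟩
      rcases this with hC | ⟨m, hm, hmn⟩
      · exact absurd hC (hdisj n)
      · exact (hinj hmn) ▸ hm
    · intro hn
      have : h n ∈ C ∪ h '' Z1 := hZ ▸ Or.inr ⟨n, hn, rfl⟩
      rcases this with hC | ⟨m, hm, hmn⟩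
      · exact absurd hC (hdisj n)
      · exact (hinj hmn) ▸ hm

theorem build_theta (α : Ordinal) (X : Ordinal → Set ℕ)
    (hX : ∀ β δ : Ordinal, β < δ → δ ≤ α → X δ ⊂ X β)
    (h1 : (X α).Infinite) (h2 : ∀ β < α, (X β \ X (β + 1)).Infinite) :
    ∃ θ : Ordinal → Set ℕ → Set ℕ,
      (∀ β ≤ α, Continuous[ScottPN, ScottPN] (θ β) ∧ Function.Injective (θ β)) ∧
      (∀ Z : Set ℕ, θ α Z ⊆ X α) ∧
      (∀ β < α, ∀ Z : Set ℕ, X (β + 1) ⊂ θ β Z ∧ θ β Z ⊆ X β) := by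
  classical
  have hsucc : ∀ β, β < α → β + 1 ≤ α := by
    intro β hβ
    rw [Ordinal.add_one_eq_succ, Order.succ_le_iff]
    exact hβ
  have hlt1 : ∀ β : Ordinal, β < β + 1 := by
    intro β
    rw [Ordinal.add_one_eq_succ]
    exact Order.lt_succ β
  let f : ℕ ↪ ↥(X α) := h1.natEmbedding
  let g : ∀ β, β < α → (ℕ ↪ ↥(X β \ X (β + 1))) := fun β hβ => (h2 β hβ).natEmbedding
  refine ⟨fun β => if hβ : β < α then
      (fun Z => (X (β + 1) ∪ {((g β hβ) 0 : ℕ)}) ∪ (fun n => ((g β hβ) (n + 1) : ℕ)) '' Z)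
    else (fun Z => (∅ : Set ℕ) ∪ (fun n => ((f n : ℕ))) '' Z), ?_, ?_, ?_⟩
  · intro β hβ
    rcases lt_or_eq_of_le hβ with hlt | rfl
    · simp only [dif_pos hlt]
      apply aux_cont_inj
      · intro a b hab
        have : (g β hlt) (a + 1) = (g β hlt) (b + 1) := Subtype.ext hab
        have := (g β hlt).injective this
        omega
      · intro n hn
        rcases hn with hmem | heq
        · exact ((g β hlt) (n + 1)).2.2 hmem
        · have h0 : (g β hlt) (n + 1) = (g β hlt) 0 := Subtype.ext heq
          have := (g β hlt).injective h0
          omega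
    · simp only [dif_neg (lt_irrefl _)]
      apply aux_cont_inj
      · intro a b hab
        exact f.injective (Subtype.ext hab)
      · intro n hn
        exact hn
  · intro Z
    simp only [dif_neg (lt_irrefl _)]
    rintro x (hx | ⟨m, _, rfl⟩)
    · exact absurd hx (Set.notMem_empty x)
    · exact (f m).2
  · intro β hβ Z
    simp only [dif_pos hβ]
    have hXsub : X (β + 1) ⊆ X β := (hX β (β + 1) (hlt1 β) (hsucc β hβ)).subset
    constructor
    · constructor
      · intro x hx
        exact Or.inl (Or.inl hx)
      · intro hcon
        have : ((g β hβ) 0 : ℕ) ∈ X (β + 1) := hcon (Or.inl (Or.inr rfl))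
        exact ((g β hβ) 0).2.2 this
    · rintro x ((hx | hx) | ⟨m, _, rfl⟩)
      · exact hXsub hx
      · rw [Set.mem_singleton_iff] at hx
        rw [hx]
        exact ((g β hβ) 0).2.1
      · exact ((g β hβ) (m + 1)).2.1

theorem scattered_inf (α : Ordinal) (X : Ordinal → Set ℕ) (hs : Scattered α X) :
    (X α).Infinite ∧ ∀ β < α, (X β \ X (β + 1)).Infinite := by
  haveI hinst : Infinite (Set ℕ) := Infinite.of_injective _ Set.singleton_injective
  obtain ⟨θ, hθ, hα, hβ⟩ := hs
  constructor
  · by_contra hfin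
    rw [Set.not_infinite] at hfin
    have hF : Finite ↥{t : Set ℕ | t ⊆ X α} := hfin.finite_subsets.to_subtype
    have hf : Function.Injective
        (fun Z : Set ℕ => (⟨θ α Z, hα Z⟩ : {t : Set ℕ | t ⊆ X α})) := by
      intro a b hab
      exact (hθ α le_rfl).2 (congrArg Subtype.val hab)
    haveI := Finite.of_injective _ hf
    exact not_finite (Set ℕ)
  · intro β hb
    by_contra hfin
    rw [Set.not_infinite] at hfin
    have hF : Finite ↥{t : Set ℕ | t ⊆ X β \ X (β + 1)} := hfin.finite_subsets.to_subtype
    have hsub : ∀ Z : Set ℕ, θ β Z \ X (β + 1) ⊆ X β \ X (β + 1) := by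
      intro Z x hx
      exact ⟨(hβ β hb Z).2 hx.1, hx.2⟩
    have hf : Function.Injective
        (fun Z : Set ℕ => (⟨θ β Z \ X (β + 1), hsub Z⟩ :
          {t : Set ℕ | t ⊆ X β \ X (β + 1)})) := by
      intro a b hab
      have hab' : θ β a \ X (β + 1) = θ β b \ X (β + 1) := congrArg Subtype.val hab
      have ha : X (β + 1) ⊆ θ β a := (hβ β hb a).1.subset
      have hbb : X (β + 1) ⊆ θ β b := (hβ β hb b).1.subset
      have : θ β a = θ β b := by
        rw [← Set.diff_union_of_subset ha, ← Set.diff_union_of_subset hbb, hab']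
      exact (hθ β hb.le).2 this
    haveI := Finite.of_injective _ hf
    exact not_finite (Set ℕ)

end Aux

/-- A strictly decreasing chain `(X_β)_{β ≤ α}` of subsets of `ℕ` is scattered
iff `X_α` and all the differences `X_β \ X_{β+1}` are infinite; and if the
chain is `𝒜`-special, these conditions are also equivalent to the chain being
`𝒜`-scattered. -/

theorem scattered_iff_infinite_differences (α : Ordinal) (X : Ordinal → Set ℕ)
    (hX : ∀ β δ : Ordinal, β < δ → δ ≤ α → X δ ⊂ X β) :
    (Scattered α X ↔ ((X α).Infinite ∧ ∀ β < α, (X β \ X (β + 1)).Infinite)) ∧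
    (∀ A : Set (Set ℕ), SpecialChain A α X → (Scattered α X ↔ AScattered A α X)) := by
  constructor
  · constructor
    · exact fun hs => scattered_inf α X hs
    · rintro ⟨h1, h2⟩
      obtain ⟨θ, p1, p2, p3⟩ := build_theta α X hX h1 h2
      exact ⟨θ, p1, p2, p3⟩
  · intro A hA
    constructor
    · intro hs
      obtain ⟨h1, h2⟩ := scattered_inf α X hs
      obtain ⟨θ, p1, p2, p3⟩ := build_theta α X hX h1 h2
      refine ⟨θ, p1, p2, p3, ?_⟩
      intro β hβ Z
      rcases lt_or_eq_of_le hβ with hlt | rfl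
      · exact hA.2.1 β hlt (θ β Z) ((p3 β hlt Z).2) ((p3 β hlt Z).1)
      · have hnot : θ β Z ∉ A := hA.2.2 _ (p2 Z)
        simp [hnot, SameParity]
    · rintro ⟨θ, p1, p2, p3, _⟩
      exact ⟨θ, p1, p2, p3⟩
end

section
/- Characterization of one-to-one Wadge hardness for Hausdorff difference classes in the Scott domain: for every H ⊆ 𝒫(ℕ) and every ordinal α with 1 ≤ α < ω₁, every member of D_α(𝒫(ℕ)) is of the form f⁻¹(H) for some injective continuous f : 𝒫(ℕ) → 𝒫(ℕ) if and only if there exists an H-scattered chain in 𝒫(ℕ) of length α+1. -/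
open Topology

lemma scott_isOpen_elim {U : Set (Set ℕ)} (hU : IsOpen[ScottPN] U) :
    ∀ Z ∈ U, ∃ F : Set ℕ, F.Finite ∧ F ⊆ Z ∧ ∀ Y : Set ℕ, F ⊆ Y → Y ∈ U := by
  induction hU with
  | basic O hO =>
    obtain ⟨A, hAfin, rfl⟩ := hO
    exact fun Z hZ => ⟨A, hAfin, hZ, fun Y hY => hY⟩
  | univ => exact fun Z _ => ⟨∅, Set.finite_empty, Set.empty_subset _, fun _ _ => trivial⟩
  | inter O₁ O₂ _ _ ih₁ ih₂ =>
    rintro Z ⟨h1, h2⟩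
    obtain ⟨F₁, hF₁, hF₁Z, hF₁o⟩ := ih₁ Z h1
    obtain ⟨F₂, hF₂, hF₂Z, hF₂o⟩ := ih₂ Z h2
    exact ⟨F₁ ∪ F₂, hF₁.union hF₂, Set.union_subset hF₁Z hF₂Z,
      fun Y hY => ⟨hF₁o Y (Set.union_subset_iff.mp hY).1, hF₂o Y (Set.union_subset_iff.mp hY).2⟩⟩
  | sUnion S _ ih =>
    rintro Z ⟨T, hT, hZT⟩
    obtain ⟨F, h1, h2, h3⟩ := ih T hT Z hZT
    exact ⟨F, h1, h2, fun Y hY => ⟨T, hT, h3 Y hY⟩⟩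

lemma scott_isOpen_of {O : Set (Set ℕ)}
    (h : ∀ Z ∈ O, ∃ F : Set ℕ, F.Finite ∧ F ⊆ Z ∧ ∀ Y : Set ℕ, F ⊆ Y → Y ∈ O) :
    IsOpen[ScottPN] O := by
  have : O = ⋃₀ {B | ∃ F : Set ℕ, F.Finite ∧ B = {Y | F ⊆ Y} ∧ B ⊆ O} := by
    ext Z; constructor
    · intro hZ
      obtain ⟨F, h1, h2, h3⟩ := h Z hZ
      exact ⟨{Y | F ⊆ Y}, ⟨F, h1, rfl, fun Y hY => h3 Y hY⟩, h2⟩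
    · rintro ⟨B, ⟨F, _, rfl, hBO⟩, hZB⟩; exact hBO hZB
  rw [this]
  refine TopologicalSpace.GenerateOpen.sUnion _ ?_
  rintro B ⟨F, hF, rfl, -⟩
  exact TopologicalSpace.GenerateOpen.basic _ ⟨F, hF, rfl⟩

lemma scott_mem_open_mono {O : Set (Set ℕ)} (hO : IsOpen[ScottPN] O) {Z Z' : Set ℕ}
    (hZ : Z ∈ O) (hZZ' : Z ⊆ Z') : Z' ∈ O := by
  obtain ⟨F, _, hFZ, h3⟩ := scott_isOpen_elim hO Z hZ
  exact h3 Z' (hFZ.trans hZZ')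

lemma scott_singleton_open (n : ℕ) : IsOpen[ScottPN] {X : Set ℕ | n ∈ X} :=
  TopologicalSpace.GenerateOpen.basic _ ⟨{n}, Set.finite_singleton n, by ext X; simp⟩

lemma scott_mono {f : Set ℕ → Set ℕ} (hf : Continuous[ScottPN, ScottPN] f)
    {Z Z' : Set ℕ} (h : Z ⊆ Z') : f Z ⊆ f Z' := by
  intro n hn
  have hopen : IsOpen[ScottPN] (f ⁻¹' {X : Set ℕ | n ∈ X}) :=
    @Continuous.isOpen_preimage _ _ ScottPN ScottPN f hf _ (scott_singleton_open n)
  exact scott_mem_open_mono hopen hn h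

lemma scott_continuous_of {f : Set ℕ → Set ℕ}
    (h : ∀ (n : ℕ) (Z : Set ℕ), n ∈ f Z → ∃ F : Set ℕ, F.Finite ∧ F ⊆ Z ∧ ∀ Y : Set ℕ, F ⊆ Y → n ∈ f Y) :
    Continuous[ScottPN, ScottPN] f := by
  letI : TopologicalSpace (Set ℕ) := ScottPN
  have key : ∀ n : ℕ, IsOpen[ScottPN] {Z | n ∈ f Z} := by
    intro n
    exact scott_isOpen_of (fun Z hZ => h n Z hZ)
  refine (continuous_generateFrom_iff (t := ScottPN)).mpr ?_
  rintro O ⟨A, hA, rfl⟩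
  have : f ⁻¹' {X | A ⊆ X} = ⋂ n ∈ A, {Z | n ∈ f Z} := by
    ext Z; simp [Set.subset_def]
  rw [this]
  exact Set.Finite.isOpen_biInter hA (fun n _ => key n)

lemma mem_DOp {E : Type*} {α : Ordinal} {U : Ordinal → Set E} {Z : E} :
    Z ∈ DOp α U ↔ ∃ β, (β < α ∧ ¬ SameParity β α) ∧ Z ∈ U β ∧ ∀ γ < β, Z ∉ U γ := by
  constructor
  · intro h
    rcases Set.mem_iUnion₂.mp h with ⟨β, hβ, h1, h2⟩
    exact ⟨β, hβ, h1, fun γ hγ hc => h2 (Set.mem_biUnion hγ hc)⟩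
  · rintro ⟨β, hβ, h1, h2⟩
    refine Set.mem_iUnion₂.mpr ⟨β, hβ, h1, fun hc => ?_⟩
    rcases Set.mem_iUnion₂.mp hc with ⟨γ, hγ, hmemγ⟩
    exact h2 γ hγ hmemγ

lemma sameParity_self (a : Ordinal) : SameParity a a := Iff.rfl

lemma backward_dir (H : Set (Set ℕ)) (α : Ordinal)
    (X : Ordinal → Set ℕ)
    (hchain : ∀ β δ : Ordinal, β < δ → δ ≤ α → X δ ⊂ X β)
    (hsc : AScattered H α X) :
    ∀ A : Set (Set ℕ), MemD ScottPN α A →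
      ∃ f : Set ℕ → Set ℕ, Continuous[ScottPN, ScottPN] f ∧
        Function.Injective f ∧ A = f ⁻¹' H := by
  obtain ⟨θ, hθ1, hθ2, hθ3, hθ4⟩ := hsc
  rintro A ⟨U, hUopen, rfl⟩
  classical
  set S : Set ℕ → Set Ordinal := fun Z => insert α {β | β < α ∧ Z ∈ U β} with hS
  have hSne : ∀ Z, (S Z).Nonempty := fun Z => ⟨α, Set.mem_insert _ _⟩
  set b : Set ℕ → Ordinal := fun Z => Ordinal.lt_wf.min (S Z) (hSne Z) with hb
  have hbmem : ∀ Z, b Z ∈ S Z := fun Z => Ordinal.lt_wf.min_mem _ _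
  have hble : ∀ Z, ∀ γ ∈ S Z, b Z ≤ γ :=
    fun Z γ hγ => not_lt.mp (Ordinal.lt_wf.not_lt_min _ hγ)
  have hbα : ∀ Z, b Z ≤ α := fun Z => hble Z α (Set.mem_insert _ _)
  have hbU : ∀ Z, b Z < α → Z ∈ U (b Z) := by
    intro Z h
    rcases (Set.mem_insert_iff.mp (hbmem Z)) with h' | h'
    · exact absurd h' (ne_of_lt h)
    · exact h'.2
  have hbleast : ∀ Z γ, γ < b Z → γ < α → Z ∉ U γ := fun Z γ h hγα hmem =>
    absurd (hble Z γ (Set.mem_insert_of_mem _ ⟨hγα, hmem⟩)) (not_le.mpr h)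
  have hSmono : ∀ Z Z' : Set ℕ, Z ⊆ Z' → S Z ⊆ S Z' := by
    intro Z Z' hss γ hγ
    rcases Set.mem_insert_iff.mp hγ with h | h
    · exact h ▸ Set.mem_insert _ _
    · exact Set.mem_insert_of_mem _ ⟨h.1, scott_mem_open_mono (hUopen γ h.1) h.2 hss⟩
  have hbmono : ∀ Z Z' : Set ℕ, Z ⊆ Z' → b Z' ≤ b Z :=
    fun Z Z' hss => hble Z' (b Z) (hSmono Z Z' hss (hbmem Z))
  set f : Set ℕ → Set ℕ := fun Z => θ (b Z) Z with hf
  -- membership characterization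
  have memA : ∀ Z, Z ∈ DOp α U ↔ (b Z < α ∧ ¬ SameParity (b Z) α) := by
    intro Z
    rw [mem_DOp]
    constructor
    · rintro ⟨β, ⟨hβα, hβP⟩, hZU, hleast⟩
      have h1 : b Z ≤ β := hble Z β (Set.mem_insert_of_mem _ ⟨hβα, hZU⟩)
      have h2 : ¬ b Z < β := by
        intro hlt
        exact hleast (b Z) hlt (hbU Z (lt_of_lt_of_le (lt_of_lt_of_le hlt hβα.le) le_rfl))
      have : b Z = β := le_antisymm h1 (not_lt.mp h2)
      rw [this]; exact ⟨hβα, hβP⟩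
    · rintro ⟨h1, h2⟩
      exact ⟨b Z, ⟨h1, h2⟩, hbU Z h1, fun γ hγ => hbleast Z γ hγ (hγ.trans h1)⟩
  have hchain' : ∀ β δ : Ordinal, β ≤ δ → δ ≤ α → X δ ⊆ X β := by
    intro β δ h hδ
    rcases eq_or_lt_of_le h with rfl | h
    · exact subset_rfl
    · exact (hchain β δ h hδ).subset
  have θsub : ∀ β, β ≤ α → ∀ Z : Set ℕ, θ β Z ⊆ X β := by
    intro β hβ Z
    rcases eq_or_lt_of_le hβ with rfl | h
    · exact hθ2 Z
    · exact (hθ3 β h Z).2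
  have hsucc_le : ∀ {a c : Ordinal}, a < c → a + 1 ≤ c := by
    intro a c h
    rw [Ordinal.add_one_eq_succ, Order.succ_le_iff]
    exact h
  have fmono : ∀ Z Z' : Set ℕ, Z ⊆ Z' → f Z ⊆ f Z' := by
    intro Z Z' hss
    rcases eq_or_lt_of_le (hbmono Z Z' hss) with heq | hlt
    · show θ (b Z) Z ⊆ θ (b Z') Z'
      rw [heq]
      exact scott_mono (hθ1 (b Z) (hbα Z)).1 hss
    · have h1 : θ (b Z) Z ⊆ X (b Z) := θsub _ (hbα Z) Z
      have h2 : X (b Z) ⊆ X (b Z' + 1) := hchain' _ _ (hsucc_le hlt) (hbα Z)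
      have h3 : X (b Z' + 1) ⊆ θ (b Z') Z' := (hθ3 (b Z') (lt_of_lt_of_le hlt (hbα Z)) Z').1.subset
      exact (h1.trans h2).trans h3
  have fkey : ∀ Z Z' : Set ℕ, b Z < b Z' → f Z ≠ f Z' := by
    intro Z Z' h hfe
    have hbZα : b Z < α := lt_of_lt_of_le h (hbα Z')
    have h1 : X (b Z + 1) ⊂ θ (b Z) Z := (hθ3 _ hbZα Z).1
    have h2 : θ (b Z') Z' ⊆ X (b Z') := θsub _ (hbα Z') Z'
    have h3 : X (b Z') ⊆ X (b Z + 1) := hchain' _ _ (hsucc_le h) (hbα Z')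
    have h4 : θ (b Z) Z ⊆ X (b Z + 1) := by
      rw [show θ (b Z) Z = θ (b Z') Z' from hfe]
      exact h2.trans h3
    exact h1.not_subset h4
  have finj : Function.Injective f := by
    intro Z Z' hfe
    rcases lt_trichotomy (b Z) (b Z') with h | h | h
    · exact absurd hfe (fkey Z Z' h)
    · have : θ (b Z) Z = θ (b Z) Z' := by
        rw [hf] at hfe
        simpa [h] using hfe
      exact (hθ1 (b Z) (hbα Z)).2 this
    · exact absurd hfe.symm (fkey Z' Z h)
  have fcont : Continuous[ScottPN, ScottPN] f := by
    apply scott_continuous_of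
    intro n Z hn
    have hopen : IsOpen[ScottPN] (θ (b Z) ⁻¹' {X : Set ℕ | n ∈ X}) :=
      @Continuous.isOpen_preimage _ _ ScottPN ScottPN _ (hθ1 (b Z) (hbα Z)).1 _
        (scott_singleton_open n)
    obtain ⟨F₁, hF₁fin, hF₁Z, hF₁⟩ := scott_isOpen_elim hopen Z hn
    by_cases hbZ : b Z < α
    · obtain ⟨F₂, hF₂fin, hF₂Z, hF₂⟩ := scott_isOpen_elim (hUopen _ hbZ) Z (hbU Z hbZ)
      refine ⟨F₁ ∪ F₂, hF₁fin.union hF₂fin, Set.union_subset hF₁Z hF₂Z, fun Y hY => ?_⟩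
      have hEZ : F₁ ∪ F₂ ⊆ Z := Set.union_subset hF₁Z hF₂Z
      have hbE : b (F₁ ∪ F₂) = b Z := by
        refine le_antisymm ?_ (hbmono _ _ hEZ)
        exact hble _ (b Z) (Set.mem_insert_of_mem _ ⟨hbZ, hF₂ _ Set.subset_union_right⟩)
      have hnE : n ∈ f (F₁ ∪ F₂) := by
        show n ∈ θ (b (F₁ ∪ F₂)) (F₁ ∪ F₂)
        rw [hbE]
        exact hF₁ _ Set.subset_union_left
      exact fmono _ Y hY hnE
    · refine ⟨F₁, hF₁fin, hF₁Z, fun Y hY => ?_⟩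
      have hbZα : b Z = α := le_antisymm (hbα Z) (not_lt.mp hbZ)
      have hbE : b F₁ = b Z := by
        refine le_antisymm ?_ (hbmono _ _ hF₁Z)
        rw [hbZα]; exact hbα F₁
      have hnE : n ∈ f F₁ := by
        show n ∈ θ (b F₁) F₁
        rw [hbE]
        exact hF₁ _ subset_rfl
      exact fmono _ Y hY hnE
  refine ⟨f, fcont, finj, ?_⟩
  ext Z
  rw [Set.mem_preimage, memA Z]
  have h4 := hθ4 (b Z) (hbα Z) Z
  constructor
  · rintro ⟨_, h2⟩; exact h4.mpr h2
  · intro hH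
    have h2 := h4.mp hH
    refine ⟨?_, h2⟩
    by_contra h1
    have : b Z = α := le_antisymm (hbα Z) (not_lt.mp h1)
    rw [this] at h2
    exact h2 (sameParity_self α)


lemma forward_dir (H : Set (Set ℕ)) (α : Ordinal) (h2 : α.card ≤ Cardinal.aleph0)
    (hhard : ∀ A : Set (Set ℕ), MemD ScottPN α A →
        ∃ f : Set ℕ → Set ℕ, Continuous[ScottPN, ScottPN] f ∧
          Function.Injective f ∧ A = f ⁻¹' H) :
    ∃ X : Ordinal → Set ℕ,
      (∀ β δ : Ordinal, β < δ → δ ≤ α → X δ ⊂ X β) ∧ AScattered H α X := by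
  classical
  -- countable injection of ordinals ≤ α into ℕ
  have hcnt : Countable (Set.Iio (α + 1) : Set Ordinal) := by
    have hcard : (α + 1).card ≤ Cardinal.aleph0 := by
      rw [Ordinal.add_one_eq_succ, Ordinal.card_succ]
      exact le_trans (add_le_add h2 Cardinal.one_lt_aleph0.le)
        (le_of_eq Cardinal.aleph0_add_aleph0)
    rw [← Cardinal.mk_le_aleph0_iff, Ordinal.mk_Iio_ordinal]
    calc Cardinal.lift _ ≤ Cardinal.lift Cardinal.aleph0 := Cardinal.lift_le.mpr hcard
      _ = Cardinal.aleph0 := Cardinal.lift_aleph0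
  obtain ⟨g, hg⟩ := exists_injective_nat (Set.Iio (α + 1) : Set Ordinal)
  have hmem1 : ∀ β : Ordinal, β ≤ α → β ∈ Set.Iio (α + 1) := by
    intro β hβ
    rw [Set.mem_Iio, Ordinal.add_one_eq_succ, Order.lt_succ_iff]
    exact hβ
  set r : Ordinal → ℕ := fun β => if h : β ∈ Set.Iio (α + 1) then g ⟨β, h⟩ + 1 else 0 with hr
  have hrpos : ∀ β, β ≤ α → r β ≠ 0 := by
    intro β hβ
    rw [hr]
    simp only [dif_pos (hmem1 β hβ)]
    exact Nat.succ_ne_zero _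
  have hrinj : ∀ β, β ≤ α → ∀ γ, γ ≤ α → r β = r γ → β = γ := by
    intro β hβ γ hγ h
    rw [hr] at h
    simp only [dif_pos (hmem1 β hβ), dif_pos (hmem1 γ hγ)] at h
    have := hg (Nat.succ_injective h)
    exact Subtype.ext_iff.mp this
  have hsucc1 : ∀ o : Ordinal, o < o + 1 := by
    intro o; rw [Ordinal.add_one_eq_succ]; exact Order.lt_succ o
  have hle_succ : ∀ {o p : Ordinal}, o < p + 1 → o ≤ p := by
    intro o p h; rwa [Ordinal.add_one_eq_succ, Order.lt_succ_iff] at h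
  set W : Ordinal → Set ℕ := fun β => {m | ∀ γ < β, (Nat.unpair m).1 ≠ r γ} with hWdef
  set U : Ordinal → Set (Set ℕ) := fun γ => {X | Nat.pair (r γ) 0 ∈ X} with hUdef
  have hUopen : ∀ γ, IsOpen[ScottPN] (U γ) := by
    intro γ
    refine TopologicalSpace.GenerateOpen.basic _ ⟨{Nat.pair (r γ) 0}, Set.finite_singleton _, ?_⟩
    ext X; simp [hUdef]
  obtain ⟨f, hfc, hfi, hfH⟩ := hhard (DOp α U) ⟨U, fun β _ => hUopen β, rfl⟩
  have hWmono : ∀ {β δ : Ordinal}, β ≤ δ → W δ ⊆ W β :=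
    fun hβδ m hm γ hγ => hm γ (lt_of_lt_of_le hγ hβδ)
  have hWpairj : ∀ β, β ≤ α → ∀ j, Nat.pair (r β) j ∈ W β := by
    intro β hβ j γ hγ
    rw [Nat.unpair_pair]
    intro h
    exact absurd (hrinj β hβ γ (le_of_lt (lt_of_lt_of_le hγ hβ)) h) (ne_of_gt hγ)
  have hWnotpair : ∀ β δ : Ordinal, β < δ → ∀ j, Nat.pair (r β) j ∉ W δ := by
    intro β δ h j hmem
    exact hmem β h (by rw [Nat.unpair_pair])
  have hchainW : ∀ β δ : Ordinal, β < δ → δ ≤ α → W δ ⊂ W β := by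
    intro β δ h hδ
    rw [Set.ssubset_def]
    refine ⟨hWmono h.le, fun hc => ?_⟩
    exact hWnotpair β δ h 0 (hc (hWpairj β (le_of_lt (lt_of_lt_of_le h hδ)) 0))
  have hfmono : ∀ {Z Z' : Set ℕ}, Z ⊆ Z' → f Z ⊆ f Z' := fun h => scott_mono hfc h
  have hfstrict : ∀ {Z Z' : Set ℕ}, Z ⊂ Z' → f Z ⊂ f Z' := by
    intro Z Z' h
    rw [Set.ssubset_iff_subset_ne] at *
    exact ⟨hfmono h.1, fun he => h.2 (hfi he)⟩
  set e : Ordinal → Set ℕ → Set ℕ := fun β Z =>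
    if β = α then (fun n => Nat.pair 0 n) '' Z
    else W (β + 1) ∪ insert (Nat.pair (r β) 0) ((fun n => Nat.pair (r β) (n + 1)) '' Z)
    with hedef
  have heα : ∀ Z, e α Z = (fun n => Nat.pair 0 n) '' Z := by
    intro Z; simp [hedef]
  have heβ : ∀ β, β ≠ α → ∀ Z m, m ∈ e β Z ↔
      (m ∈ W (β + 1) ∨ m = Nat.pair (r β) 0 ∨ ∃ n ∈ Z, Nat.pair (r β) (n + 1) = m) := by
    intro β hβ Z m
    rw [hedef]
    simp only [if_neg hβ, Set.mem_union, Set.mem_insert_iff, Set.mem_image]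
  -- key membership computation
  have hkey : ∀ β, β < α → ∀ γ, γ ≤ α → ∀ Z, (e β Z ∈ U γ ↔ β ≤ γ) := by
    intro β hβ γ hγ Z
    have hβα : β ≤ α := hβ.le
    have : e β Z ∈ U γ ↔ Nat.pair (r γ) 0 ∈ e β Z := Iff.rfl
    rw [this, heβ β (ne_of_lt hβ) Z]
    constructor
    · rintro (h | h | ⟨n, -, h⟩)
      · by_contra hc
        exact h γ (lt_of_lt_of_le (not_le.mp hc) (le_of_lt (hsucc1 β))) (by rw [Nat.unpair_pair])
      · exact le_of_eq (hrinj γ hγ β hβα (Nat.pair_eq_pair.mp h).1).symm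
      · exact absurd (Nat.pair_eq_pair.mp h).2 (Nat.succ_ne_zero n)
    · intro hβγ
      rcases eq_or_lt_of_le hβγ with rfl | hlt
      · exact Or.inr (Or.inl rfl)
      · left
        intro δ hδ
        rw [Nat.unpair_pair]
        intro hre
        have hδβ : δ ≤ β := hle_succ hδ
        have := hrinj γ hγ δ (hδβ.trans hβα) hre
        rw [this] at hlt
        exact absurd hlt (not_lt.mpr hδβ)
  have hmemA : ∀ β, β ≤ α → ∀ Z, (e β Z ∈ DOp α U ↔ (β < α ∧ ¬ SameParity β α)) := by
    intro β hβ Z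
    rcases eq_or_lt_of_le hβ with rfl | hlt
    · simp only [lt_irrefl, false_and, iff_false]
      rw [mem_DOp]
      rintro ⟨β', ⟨hβ', hP⟩, hmem, -⟩
      have hmem' : Nat.pair (r β') 0 ∈ e β Z := hmem
      rw [heα] at hmem'
      obtain ⟨n, -, hn⟩ := hmem'
      exact hrpos β' hβ'.le ((Nat.pair_eq_pair.mp hn).1).symm
    · rw [mem_DOp]
      constructor
      · rintro ⟨β', ⟨hβ'α, hP⟩, hmem, hleast⟩
        have ha : β ≤ β' := (hkey β hlt β' hβ'α.le Z).mp hmem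
        have hb : ¬ β < β' := fun hc => hleast β hc ((hkey β hlt β hlt.le Z).mpr le_rfl)
        have hde : β' = β := le_antisymm (not_lt.mp hb) ha
        exact ⟨hlt, hde ▸ hP⟩
      · rintro ⟨-, hP⟩
        exact ⟨β, ⟨hlt, hP⟩, (hkey β hlt β hlt.le Z).mpr le_rfl,
          fun γ hγ hc => absurd ((hkey β hlt γ (hγ.trans hlt).le Z).mp hc) (not_le.mpr hγ)⟩
  have hecont : ∀ β, β ≤ α → Continuous[ScottPN, ScottPN] (e β) := by
    intro β hβ
    apply scott_continuous_of
    intro n₀ Z hn₀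
    rcases eq_or_ne β α with rfl | hne
    · rw [heα] at hn₀
      obtain ⟨n, hnZ, hn⟩ := hn₀
      refine ⟨{n}, Set.finite_singleton n, Set.singleton_subset_iff.mpr hnZ, fun Y hY => ?_⟩
      rw [heα]
      exact ⟨n, Set.singleton_subset_iff.mp hY, hn⟩
    · rw [heβ β hne Z] at hn₀
      rcases hn₀ with h | h | ⟨n, hnZ, hn⟩
      · exact ⟨∅, Set.finite_empty, Set.empty_subset _, fun Y _ =>
          (heβ β hne Y n₀).mpr (Or.inl h)⟩
      · exact ⟨∅, Set.finite_empty, Set.empty_subset _, fun Y _ =>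
          (heβ β hne Y n₀).mpr (Or.inr (Or.inl h))⟩
      · exact ⟨{n}, Set.finite_singleton n, Set.singleton_subset_iff.mpr hnZ, fun Y hY =>
          (heβ β hne Y n₀).mpr (Or.inr (Or.inr ⟨n, Set.singleton_subset_iff.mp hY, hn⟩))⟩
  have heinj : ∀ β, β ≤ α → Function.Injective (e β) := by
    intro β hβ
    rcases eq_or_ne β α with rfl | hne
    · intro Z Z' hZZ
      rw [heα, heα] at hZZ
      exact Set.image_injective.mpr (fun a b h => (Nat.pair_eq_pair.mp h).2) hZZ
    · intro Z Z' hZZ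
      have hmm : ∀ (n : ℕ) (Y : Set ℕ), n ∈ Y ↔ Nat.pair (r β) (n + 1) ∈ e β Y := by
        intro n Y
        rw [heβ β hne Y]
        constructor
        · intro h; exact Or.inr (Or.inr ⟨n, h, rfl⟩)
        · rintro (h | h | ⟨n', hn', h⟩)
          · exact absurd (by rw [Nat.unpair_pair] : (Nat.unpair (Nat.pair (r β) (n + 1))).1 = r β)
              (h β (hsucc1 β))
          · exact absurd (Nat.pair_eq_pair.mp h).2 (Nat.succ_ne_zero n)
          · exact (Nat.succ_injective (Nat.pair_eq_pair.mp h).2) ▸ hn'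
      ext n
      rw [hmm n Z, hmm n Z', hZZ]
  -- subset relations
  have heαW : ∀ Z, e α Z ⊆ W α := by
    intro Z m hm
    rw [heα] at hm
    obtain ⟨n, -, rfl⟩ := hm
    intro γ hγ
    rw [Nat.unpair_pair]
    exact (hrpos γ hγ.le).symm
  have heβW : ∀ β, β < α → ∀ Z, e β Z ⊆ W β := by
    intro β hβ Z m hm
    rw [heβ β (ne_of_lt hβ) Z] at hm
    rcases hm with h | h | ⟨n, -, h⟩
    · exact hWmono (le_of_lt (hsucc1 β)) h
    · exact h ▸ hWpairj β hβ.le 0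
    · exact h ▸ hWpairj β hβ.le (n + 1)
  have heβW' : ∀ β, β < α → ∀ Z, W (β + 1) ⊂ e β Z := by
    intro β hβ Z
    rw [Set.ssubset_def]
    constructor
    · intro m hm
      rw [heβ β (ne_of_lt hβ) Z]
      exact Or.inl hm
    · intro hc
      exact hWnotpair β (β + 1) (hsucc1 β) 0
        (hc ((heβ β (ne_of_lt hβ) Z (Nat.pair (r β) 0)).mpr (Or.inr (Or.inl rfl))))
  -- assemble
  refine ⟨fun β => f (W β), fun β δ h hδ => hfstrict (hchainW β δ h hδ),
    fun β Z => f (e β Z), ?_, ?_, ?_, ?_⟩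
  · intro β hβ
    exact ⟨@Continuous.comp _ _ _ ScottPN ScottPN ScottPN _ _ hfc (hecont β hβ),
      hfi.comp (heinj β hβ)⟩
  · intro Z
    exact hfmono (heαW Z)
  · intro β hβ Z
    exact ⟨hfstrict (heβW' β hβ Z), hfmono (heβW β hβ Z)⟩
  · intro β hβ Z
    have h1 : e β Z ∈ DOp α U ↔ f (e β Z) ∈ H := by rw [hfH]; exact Iff.rfl
    rw [← h1, hmemA β hβ Z]
    rcases eq_or_lt_of_le hβ with rfl | hlt
    · simp [sameParity_self]
    · simp [hlt]

/-- One-to-one Wadge hardness for `D_α(𝒫(ℕ))` is characterized by the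
existence of an `H`-scattered chain of length `α+1`. -/
theorem one_one_wadge_hard_iff_scattered_chain (H : Set (Set ℕ))
    (α : Ordinal) (h1 : 1 ≤ α) (h2 : α.card ≤ Cardinal.aleph0) :
    (∀ A : Set (Set ℕ), MemD ScottPN α A →
        ∃ f : Set ℕ → Set ℕ, Continuous[ScottPN, ScottPN] f ∧
          Function.Injective f ∧ A = f ⁻¹' H) ↔
      ∃ X : Ordinal → Set ℕ,
        (∀ β δ : Ordinal, β < δ → δ ≤ α → X δ ⊂ X β) ∧ AScattered H α X := by
  constructor
  · intro hhard
    exact forward_dir H α h2 hhard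
  · rintro ⟨X, hchain, hsc⟩
    exact backward_dir H α X hchain hsc
end

section
/- For every ordinal α with 1 ≤ α < ω₁ there exists a one-to-one Wadge complete set for D_α(𝒫(ℕ)): a family H ∈ D_α(𝒫(ℕ)) such that every member of D_α(𝒫(ℕ)) is of the form f⁻¹(H) for some injective continuous f : 𝒫(ℕ) → 𝒫(ℕ). -/
open Topology

/-- Every Scott-open set is a union of basic open sets: each of its points
contains a finite set whose basic open neighbourhood is inside the set. -/
lemma scott_open_char {U : Set (Set ℕ)} (h : IsOpen[ScottPN] U) :
    ∀ X ∈ U, ∃ A : Set ℕ, A.Finite ∧ A ⊆ X ∧ {Y : Set ℕ | A ⊆ Y} ⊆ U := by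
  induction h with
  | basic O hO => rintro X hX; obtain ⟨A, hAfin, rfl⟩ := hO; exact ⟨A, hAfin, hX, subset_rfl⟩
  | univ => intro X _; exact ⟨∅, Set.finite_empty, Set.empty_subset X, by simp⟩
  | inter U V hU hV ihU ihV =>
      rintro X ⟨hXU, hXV⟩
      obtain ⟨A, hA, hAX, hAU⟩ := ihU X hXU
      obtain ⟨B, hB, hBX, hBV⟩ := ihV X hXV
      exact ⟨A ∪ B, hA.union hB, Set.union_subset hAX hBX,
        fun Y hY => ⟨hAU (fun a ha => hY (Or.inl ha)), hBV (fun b hb => hY (Or.inr hb))⟩⟩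
  | sUnion S hS ih =>
      rintro X ⟨V, hV, hXV⟩
      obtain ⟨A, hA, hAX, hAV⟩ := ih V hV X hXV
      exact ⟨A, hA, hAX, fun Y hY => ⟨V, hV, hAV hY⟩⟩

/-- Membership in `DOp α` only depends on the values of the open sequence below `α`. -/
lemma mem_DOp_congr {E : Type*} (α : Ordinal) (U V : Ordinal → Set E) (x y : E)
    (h : ∀ β < α, (x ∈ U β ↔ y ∈ V β)) : x ∈ DOp α U ↔ y ∈ DOp α V := by
  simp only [DOp, Set.mem_iUnion, Set.mem_setOf_eq, Set.mem_diff, Set.mem_Iio, exists_prop]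
  constructor
  · rintro ⟨β, ⟨hβα, hpar⟩, hx, hnot⟩
    refine ⟨β, ⟨hβα, hpar⟩, (h β hβα).1 hx, fun hy => hnot ?_⟩
    obtain ⟨γ, hγ, hyγ⟩ := hy
    exact ⟨γ, hγ, (h γ (hγ.trans hβα)).2 hyγ⟩
  · rintro ⟨β, ⟨hβα, hpar⟩, hy, hnot⟩
    refine ⟨β, ⟨hβα, hpar⟩, (h β hβα).2 hy, fun hx => hnot ?_⟩
    obtain ⟨γ, hγ, hxγ⟩ := hx
    exact ⟨γ, hγ, (h γ (hγ.trans hβα)).1 hxγ⟩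

/-- For every countable ordinal `α ≥ 1` there exists a one-to-one Wadge
complete set for `D_α(𝒫(ℕ))`. -/
theorem exists_one_one_wadge_complete_for_D
    (α : Ordinal) (h1 : 1 ≤ α) (h2 : α.card ≤ Cardinal.aleph0) :
    ∃ H : Set (Set ℕ), MemD ScottPN α H ∧
      ∀ A : Set (Set ℕ), MemD ScottPN α A →
        ∃ f : Set ℕ → Set ℕ, Continuous[ScottPN, ScottPN] f ∧
          Function.Injective f ∧ A = f ⁻¹' H := by
  classical
  -- a countable injective coding of ordinals below `α`
  have hcnt : Countable (Set.Iio α) := by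
    rw [← Cardinal.mk_le_aleph0_iff, Ordinal.mk_Iio_ordinal]
    exact (Cardinal.lift_le_aleph0).2 h2
  obtain ⟨ι, hι⟩ := exists_injective_nat (Set.Iio α)
  set g : Ordinal → ℕ := fun β => if h : β < α then ι ⟨β, h⟩ else 0 with hg
  have hginj : ∀ β, β < α → ∀ β', β' < α → g β = g β' → β = β' := by
    intro β hβ β' hβ' he
    simp only [hg, dif_pos hβ, dif_pos hβ'] at he
    exact Subtype.ext_iff.1 (hι he)
  -- an enumeration of finite subsets of ℕ
  set Fk : ℕ → Set ℕ := fun k => ↑(Denumerable.ofNat (Finset ℕ) k) with hFk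
  have hFk_fin : ∀ k, (Fk k).Finite := fun k => (Denumerable.ofNat (Finset ℕ) k).finite_toSet
  have hFk_surj : ∀ A : Set ℕ, A.Finite → ∃ k, Fk k = A := by
    intro A hA
    obtain ⟨k, hk⟩ := (Denumerable.eqv (Finset ℕ)).symm.surjective hA.toFinset
    refine ⟨k, ?_⟩
    simp only [hFk]
    rw [show Denumerable.ofNat (Finset ℕ) k = hA.toFinset from hk]
    exact hA.coe_toFinset
  -- the codes
  set code : Ordinal → ℕ → ℕ := fun β k => Nat.pair 1 (Nat.pair (g β) k) with hcode
  -- the universal open sequence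
  set W : Ordinal → Set (Set ℕ) := fun β =>
    ⋃ k : ℕ, {Z : Set ℕ | insert (code β k) ((fun n => Nat.pair 0 n) '' Fk k) ⊆ Z} with hW
  have hWopen : ∀ β, IsOpen[ScottPN] (W β) := by
    intro β
    refine @isOpen_iUnion _ _ ScottPN _ (fun k => ?_)
    exact TopologicalSpace.GenerateOpen.basic _
      ⟨_, ((hFk_fin k).image _).insert _, rfl⟩
  refine ⟨DOp α W, ⟨W, fun β _ => hWopen β, rfl⟩, ?_⟩
  rintro A ⟨U, hUopen, rfl⟩
  -- the constant part of the reduction, coding the sequence `U`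
  set C : Set ℕ := {m | ∃ β, β < α ∧ ∃ k, {Y : Set ℕ | Fk k ⊆ Y} ⊆ U β ∧ m = code β k} with hC
  set f : Set ℕ → Set ℕ := fun X => (fun n => Nat.pair 0 n) '' X ∪ C with hf
  -- membership characterization for `f X`
  have hCnot0 : ∀ m ∈ C, m.unpair.1 = 1 := by
    rintro m ⟨β, hβ, k, hk, rfl⟩
    simp [hcode]
  have hmem : ∀ X m, m ∈ f X ↔ ((m.unpair.1 = 0 ∧ m.unpair.2 ∈ X) ∨ m ∈ C) := by
    intro X m
    constructor
    · rintro (⟨n, hn, rfl⟩ | hmC)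
      · exact Or.inl (by simp [hn])
      · exact Or.inr hmC
    · rintro (⟨h0, h2⟩ | hmC)
      · exact Or.inl ⟨m.unpair.2, h2, by rw [← h0]; exact Nat.pair_unpair m⟩
      · exact Or.inr hmC
  have hpair0 : ∀ X n, Nat.pair 0 n ∈ f X ↔ n ∈ X := by
    intro X n
    rw [hmem]
    constructor
    · rintro (⟨_, h2⟩ | hmC)
      · simpa using h2
      · have := hCnot0 _ hmC; simp at this
    · intro h; exact Or.inl (by simpa using h)
  -- the open sets `U β` for `β < α` are unions of coded basic sets
  have hU_eq : ∀ β, β < α → ∀ X, (X ∈ U β ↔ ∃ k, {Y : Set ℕ | Fk k ⊆ Y} ⊆ U β ∧ Fk k ⊆ X) := by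
    intro β hβ X
    constructor
    · intro hX
      obtain ⟨B, hBfin, hBX, hBU⟩ := scott_open_char (hUopen β hβ) X hX
      obtain ⟨k, hk⟩ := hFk_surj B hBfin
      exact ⟨k, by rw [hk]; exact hBU, hk ▸ hBX⟩
    · rintro ⟨k, hkU, hkX⟩; exact hkU hkX
  -- the key reduction property
  have hWU : ∀ X : Set ℕ, ∀ β < α, (f X ∈ W β ↔ X ∈ U β) := by
    intro X β hβ
    simp only [hW, Set.mem_iUnion, Set.mem_setOf_eq]
    constructor
    · rintro ⟨k, hk⟩
      have h1 : code β k ∈ f X := hk (Set.mem_insert _ _)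
      have h1C : code β k ∈ C := by
        rcases (hmem X _).1 h1 with ⟨h0, _⟩ | hmC
        · simp [hcode] at h0
        · exact hmC
      obtain ⟨β', hβ', k', hk', he⟩ := h1C
      have he' : (1 : ℕ) = 1 ∧ g β = g β' ∧ k = k' := by
        simpa [hcode, Nat.pair_eq_pair] using he
      obtain ⟨-, hgg, hkk⟩ := he'
      have hββ' : β = β' := hginj β hβ β' hβ' hgg
      subst hββ'; subst hkk
      have h2 : Fk k ⊆ X := by
        intro n hn
        exact (hpair0 X n).1 (hk (Set.mem_insert_of_mem _ ⟨n, hn, rfl⟩))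
      exact (hU_eq β hβ X).2 ⟨k, hk', h2⟩
    · intro hXU
      obtain ⟨k, hkU, hkX⟩ := (hU_eq β hβ X).1 hXU
      refine ⟨k, ?_⟩
      rintro m (rfl | ⟨n, hn, rfl⟩)
      · exact Or.inr ⟨β, hβ, k, hkU, rfl⟩
      · exact Or.inl ⟨n, hkX hn, rfl⟩
  -- continuity
  have hcont : Continuous[ScottPN, ScottPN] f := by
    rw [ScottPN, continuous_generateFrom_iff]
    rintro O ⟨B, hBfin, rfl⟩
    by_cases hc : ∀ m ∈ B \ C, m.unpair.1 = 0
    · have heq : f ⁻¹' {X : Set ℕ | B ⊆ X} =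
          {X : Set ℕ | (fun m => m.unpair.2) '' (B \ C) ⊆ X} := by
        ext X
        simp only [Set.mem_preimage, Set.mem_setOf_eq]
        constructor
        · rintro h n ⟨m, hm, rfl⟩
          rcases (hmem X m).1 (h hm.1) with ⟨_, h2⟩ | hmC
          · exact h2
          · exact absurd hmC hm.2
        · intro h m hm
          by_cases hmC : m ∈ C
          · exact (hmem X m).2 (Or.inr hmC)
          · exact (hmem X m).2 (Or.inl ⟨hc m ⟨hm, hmC⟩, h ⟨m, ⟨hm, hmC⟩, rfl⟩⟩)
      rw [heq]
      exact TopologicalSpace.GenerateOpen.basic _ ⟨_, (Set.Finite.diff hBfin : (B \ C).Finite).image _, rfl⟩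
    · push_neg at hc
      obtain ⟨m, hm, hm0⟩ := hc
      have heq : f ⁻¹' {X : Set ℕ | B ⊆ X} = ∅ := by
        ext X
        simp only [Set.mem_preimage, Set.mem_setOf_eq, Set.mem_empty_iff_false, iff_false]
        intro h
        rcases (hmem X m).1 (h hm.1) with ⟨h0, _⟩ | hmC
        · exact hm0 h0
        · exact hm.2 hmC
      rw [heq]
      exact @isOpen_empty _ (TopologicalSpace.generateFrom _)
  -- injectivity
  have hinj : Function.Injective f := by
    intro X Y hXY
    ext n
    rw [← hpair0 X n, ← hpair0 Y n, hXY]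
  refine ⟨f, hcont, hinj, ?_⟩
  ext X
  rw [Set.mem_preimage]
  exact mem_DOp_congr α U W X (f X) (fun β hβ => (hWU X β hβ).symm)
end

section
/- Let E be a topological space and α ≥ 1 an ordinal. (1) If A ∈ D_α(E) and L ⊆ E is open then A ∩ L ∈ D_α(E). (2) If α is infinite, A ∈ D_α(E) and F ⊆ E is closed then A ∩ F ∈ D_α(E). (3) If β > 0 is an ordinal with β + α = α, C ∈ D_β(E), D ∈ D_α(E), L ⊆ E is open, C ⊆ L and L ∩ D = ∅, then C ∪ D ∈ D_α(E). -/
open Topology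

namespace DAux
open Ordinal

/-- canonical decomposition existence -/
lemma exists_decomp (o : Ordinal) :
    ∃ (l : Ordinal) (n : ℕ), (l = 0 ∨ Order.IsSuccLimit l) ∧ o = l + n := by
  obtain ⟨n, hn⟩ := lt_omega0.1 (mod_lt o omega0_ne_zero)
  refine ⟨ω * (o / ω), n, ?_, ?_⟩
  · rcases eq_or_ne (o / ω) 0 with h | h
    · left; simp [h]
    · right; exact isSuccLimit_mul_left isSuccLimit_omega0 (pos_iff_ne_zero.2 h)
  · rw [← hn, div_add_mod]

lemma nat_add_lt_of_limit {l l' : Ordinal} (hl' : Order.IsSuccLimit l') (h : l < l') (n : ℕ) :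
    l + n < l' := by
  induction n with
  | zero => simpa using h
  | succ k ih =>
    have : l + (k + 1 : ℕ) = Order.succ (l + k) := by
      push_cast
      rw [← add_assoc, add_one_eq_succ]
    rw [this]
    exact hl'.succ_lt ih

lemma decomp_unique {l l' : Ordinal} {n n' : ℕ}
    (hl : l = 0 ∨ Order.IsSuccLimit l) (hl' : l' = 0 ∨ Order.IsSuccLimit l')
    (h : l + n = l' + n') : l = l' ∧ n = n' := by
  have hll : l = l' := by
    rcases lt_trichotomy l l' with hlt | he | hlt
    · rcases hl' with rfl | hlim
      · exact absurd hlt (by simp)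
      · have := nat_add_lt_of_limit hlim hlt n
        rw [h] at this
        exact absurd ((le_self_add : l' ≤ l' + n').trans_lt this) (lt_irrefl _)
    · exact he
    · rcases hl with rfl | hlim
      · exact absurd hlt (by simp)
      · have := nat_add_lt_of_limit hlim hlt n'
        rw [← h] at this
        exact absurd ((le_self_add : l ≤ l + n).trans_lt this) (lt_irrefl _)
  subst hll
  have : (n : Ordinal) = n' := add_left_cancel h
  exact ⟨rfl, Nat.cast_injective this⟩

lemma ordEven_iff {l : Ordinal} {n : ℕ} (hl : l = 0 ∨ Order.IsSuccLimit l) :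
    OrdEven (l + n) ↔ Even n := by
  constructor
  · rintro ⟨l', m, hl', he⟩
    have : (2 * m : Ordinal) = ((2 * m : ℕ) : Ordinal) := by norm_cast
    rw [this] at he
    obtain ⟨-, hn⟩ := decomp_unique hl hl' he
    exact ⟨m, by omega⟩
  · rintro ⟨m, hm⟩
    refine ⟨l, m, hl, ?_⟩
    have : ((n : ℕ) : Ordinal) = 2 * m := by
      rw [hm, show m + m = 2 * m from by ring]; norm_cast
    rw [this]

lemma ordEven_zero : OrdEven 0 := ⟨0, 0, Or.inl rfl, by simp⟩

lemma ordEven_succ (o : Ordinal) : OrdEven (o + 1) ↔ ¬ OrdEven o := by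
  obtain ⟨l, n, hl, rfl⟩ := exists_decomp o
  have h1 : l + n + 1 = l + ((n + 1 : ℕ) : Ordinal) := by push_cast; rw [add_assoc]
  rw [h1, ordEven_iff hl, ordEven_iff hl, Nat.even_add_one]

lemma ordEven_add_right {e : Ordinal} (he : OrdEven e) (d : Ordinal) :
    OrdEven (e + d) ↔ OrdEven d := by
  obtain ⟨l, m, hl, rfl⟩ := he
  obtain ⟨l', n, hl', rfl⟩ := exists_decomp d
  rcases hl' with rfl | hlim
  · have : l + 2 * m + (0 + n) = l + ((2 * m + n : ℕ) : Ordinal) := by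
      push_cast; rw [zero_add, add_assoc]
    rw [this, ordEven_iff hl, ordEven_iff (Or.inl rfl)]
    simp [Nat.even_add, parity_simps]
  · have habs : (2 * m : Ordinal) + l' = l' := by
      have h2 : ((2 * m : ℕ) : Ordinal) + l' = l' := by
        have hle : ω ≤ l' := omega0_le_of_isSuccLimit hlim
        conv_lhs => rw [← Ordinal.add_sub_cancel_of_le hle, ← add_assoc,
          add_omega0 (nat_lt_omega0 _)]
        rw [Ordinal.add_sub_cancel_of_le hle]
      simpa using h2
    have hll : (l + l' = 0 ∨ Order.IsSuccLimit (l + l')) := Or.inr (isSuccLimit_add l hlim)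
    have : l + 2 * m + (l' + n) = (l + l') + n := by
      rw [← add_assoc, add_assoc l (2*m) l', habs]
    rw [this, ordEven_iff hll, ordEven_iff (Or.inr hlim)]

lemma not_ordEven_one : ¬ OrdEven 1 := by
  have h := ordEven_succ 0
  rw [zero_add] at h
  exact fun h1 => (h.1 h1) ordEven_zero


lemma mem_DOp_iff {E : Type*} {α : Ordinal} {U : Ordinal → Set E} {x : E} :
    x ∈ DOp α U ↔ ∃ β, β < α ∧ ¬ SameParity β α ∧ x ∈ U β ∧ ∀ γ < β, x ∉ U γ := by
  simp only [DOp, Set.mem_iUnion, Set.mem_setOf_eq, Set.mem_diff, Set.mem_Iio, exists_prop]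
  constructor
  · rintro ⟨β, ⟨h1, h2⟩, h3, h4⟩
    exact ⟨β, h1, h2, h3, fun γ hγ hx => h4 ⟨γ, hγ, hx⟩⟩
  · rintro ⟨β, h1, h2, h3, h4⟩
    exact ⟨β, ⟨h1, h2⟩, h3, fun ⟨γ, hγ, hx⟩ => h4 γ hγ hx⟩

lemma not_mem_DOp {E : Type*} {α : Ordinal} {V : Ordinal → Set E} {x : E} {s : Ordinal}
    (hs : SameParity s α) (hx : x ∈ V s) (hlow : ∀ δ < s, x ∉ V δ) : x ∉ DOp α V := by
  rw [mem_DOp_iff]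
  rintro ⟨β, hβα, hpar, hxV, hmin⟩
  rcases lt_trichotomy β s with h | rfl | h
  · exact hlow β h hxV
  · exact hpar hs
  · exact hmin s h hx

/-- transport lemma -/
lemma DOp_transport {E : Type*} {α₁ α₂ : Ordinal} {U V : Ordinal → Set E}
    {φ : Ordinal → Ordinal} {x : E}
    (hmono : ∀ γ γ', γ < γ' → γ' < α₁ → φ γ < φ γ')
    (hlt : ∀ γ < α₁, φ γ < α₂)
    (hpar : ∀ γ < α₁, (SameParity (φ γ) α₂ ↔ SameParity γ α₁))
    (hmem : ∀ γ < α₁, (x ∈ V (φ γ) ↔ x ∈ U γ))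
    (hcover : ∀ δ < α₂, x ∈ V δ → (∀ δ' < δ, x ∉ V δ') →
      (∃ γ < α₁, δ = φ γ) ∨
      (SameParity δ α₂ ∧ ∀ γ < α₁, x ∈ U γ → φ γ < δ)) :
    (x ∈ DOp α₂ V ↔ x ∈ DOp α₁ U) := by
  rw [mem_DOp_iff, mem_DOp_iff]
  constructor
  · rintro ⟨δ, hδ, hδpar, hxδ, hδmin⟩
    rcases hcover δ hδ hxδ hδmin with ⟨γ, hγ, rfl⟩ | ⟨hsp, -⟩
    · refine ⟨γ, hγ, fun h => hδpar ((hpar γ hγ).2 h), (hmem γ hγ).1 hxδ, ?_⟩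
      intro γ' hγ' hxγ'
      exact hδmin (φ γ') (hmono γ' γ hγ' hγ) ((hmem γ' (hγ'.trans hγ)).2 hxγ')
    · exact absurd hsp hδpar
  · rintro ⟨β, hβ, hβpar, hxβ, hβmin⟩
    have hVmin : ∀ δ < φ β, x ∉ V δ := by
      by_contra hbad
      push_neg at hbad
      set S : Set Ordinal := {δ | δ < φ β ∧ x ∈ V δ} with hS
      have hne : S.Nonempty := by
        obtain ⟨δ, h1, h2⟩ := hbad; exact ⟨δ, h1, h2⟩
      have hmem0 : sInf S ∈ S := csInf_mem hne
      obtain ⟨hinf1, hinf2⟩ := hmem0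
      have hminS : ∀ δ' < sInf S, x ∉ V δ' := by
        intro δ' h1 h2
        have hin : δ' ∈ S := ⟨h1.trans hinf1, h2⟩
        exact absurd (csInf_le' hin) (not_le.2 h1)
      have hinfα : sInf S < α₂ := hinf1.trans (hlt β hβ)
      rcases hcover _ hinfα hinf2 hminS with ⟨γ, hγ, hg⟩ | ⟨-, h2⟩
      · -- sInf S = φ γ, with φ γ < φ β so γ < β
        have hγβ : γ < β := by
          rcases lt_trichotomy γ β with h | rfl | h
          · exact h
          · exact absurd (hg ▸ hinf1) (lt_irrefl _)
          · exact absurd (hinf1.trans (hmono β γ h hγ)) (hg ▸ lt_irrefl _)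
        exact hβmin γ hγβ ((hmem γ hγ).1 (hg ▸ hinf2))
      · exact absurd hinf1 (not_lt.2 (h2 β hβ hxβ).le)
    refine ⟨φ β, hlt β hβ, fun h => hβpar ((hpar β hβ).1 h), (hmem β hβ).2 hxβ, hVmin⟩


lemma not_sameParity_iff {a b : Ordinal} : ¬ SameParity a b ↔ (OrdEven a ↔ ¬ OrdEven b) := by
  unfold SameParity; tauto

lemma ordEven_add_two (o : Ordinal) : OrdEven (o + 2) ↔ OrdEven o := by
  rw [show (2 : Ordinal) = 1 + 1 from by norm_num, ← add_assoc, ordEven_succ, ordEven_succ,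
    not_not]

lemma natCast_lt_ord {m n : ℕ} (h : m < n) : (m : Ordinal) < (n : Ordinal) := by
  exact_mod_cast h

lemma nat_add_absorb {k α : Ordinal} (hk : k < ω) (h : ω ≤ α) : k + α = α := by
  conv_lhs => rw [← Ordinal.add_sub_cancel_of_le h, ← add_assoc, add_omega0 hk]
  rw [Ordinal.add_sub_cancel_of_le h]

lemma part1 {E : Type*} (t : TopologicalSpace E) (α : Ordinal)
    (A L : Set E) (hA : MemD t α A) (hL : IsOpen[t] L) : MemD t α (A ∩ L) := by
  obtain ⟨U, hU, rfl⟩ := hA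
  refine ⟨fun β => U β ∩ L, fun β hβ => (hU β hβ).inter hL, ?_⟩
  ext x
  by_cases hx : x ∈ L
  · have := DOp_transport (α₁ := α) (α₂ := α) (U := U) (V := fun β => U β ∩ L)
      (φ := id) (x := x)
      (fun γ γ' h _ => h) (fun γ h => h) (fun γ _ => Iff.rfl)
      (fun γ _ => by simp [hx]) (fun δ hδ _ _ => Or.inl ⟨δ, hδ, rfl⟩)
    simp only [Set.mem_inter_iff]
    constructor
    · rintro ⟨h1, -⟩; exact this.2 h1
    · intro h; exact ⟨this.1 h, hx⟩
  · constructor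
    · rintro ⟨-, h⟩; exact absurd h hx
    · intro h
      rw [mem_DOp_iff] at h
      obtain ⟨β, -, -, hxβ, -⟩ := h
      exact absurd hxβ.2 hx


lemma part2 {E : Type*} (t : TopologicalSpace E) (α : Ordinal) (hω : ω ≤ α)
    (A F : Set E) (hA : MemD t α A) (hF : IsClosed[t] F) : MemD t α (A ∩ F) := by
  classical
  obtain ⟨U, hU, rfl⟩ := hA
  set G : Set E := Fᶜ with hGdef
  have hG : IsOpen[t] G := hF.isOpen_compl
  set s : Ordinal := if OrdEven α then 0 else 1 with hsdef
  have hs01 : s = 0 ∨ s = 1 := by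
    rw [hsdef]; split_ifs <;> simp
  have hs2 : s < 2 := by rcases hs01 with h | h <;> rw [h] <;> norm_num
  have hspar : SameParity s α := by
    rw [hsdef]; split_ifs with h
    · exact ⟨fun _ => h, fun _ => ordEven_zero⟩
    · exact ⟨fun h1 => absurd h1 not_ordEven_one, fun ha => absurd ha h⟩
  set V : Ordinal → Set E :=
    fun ξ => if ξ = s then G else if ξ < 2 then ∅ else if ξ < ω then U (ξ - 2) else U ξ
    with hVdef
  have hVval : ∀ ξ, V ξ = if ξ = s then G
      else if ξ < 2 then ∅ else if ξ < ω then U (ξ - 2) else U ξ := fun _ => rfl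
  set φ : Ordinal → Ordinal := fun γ => if γ < ω then 2 + γ else γ with hφdef
  have hφval : ∀ γ, φ γ = if γ < ω then 2 + γ else γ := fun _ => rfl
  have h2ω : (2 : Ordinal) < ω := by
    rw [show (2 : Ordinal) = ((2 : ℕ) : Ordinal) from by norm_cast]
    exact nat_lt_omega0 2
  have hφω : ∀ γ, γ < ω → 2 + γ < ω := by
    intro γ hγ
    obtain ⟨n, rfl⟩ := lt_omega0.1 hγ
    rw [show (2 : Ordinal) + n = ((2 + n : ℕ) : Ordinal) from by norm_cast]
    exact nat_lt_omega0 _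
  refine ⟨V, ?_, ?_⟩
  · intro ξ hξ
    rw [hVval]
    split_ifs with h1 h2 h3
    · exact hG
    · exact isOpen_empty
    · exact hU _ ((sub_le_self ξ 2).trans_lt hξ)
    · exact hU _ hξ
  · ext x
    by_cases hx : x ∈ F
    · have hVφ : ∀ γ, x ∈ V (φ γ) ↔ x ∈ U γ := by
        intro γ
        rw [hφval]
        by_cases hγ : γ < ω
        · rw [if_pos hγ, hVval]
          rw [if_neg (hs2.trans_le (le_self_add : (2:Ordinal) ≤ 2 + γ)).ne',
            if_neg (not_lt.2 (le_self_add : (2:Ordinal) ≤ 2 + γ)), if_pos (hφω γ hγ), Ordinal.add_sub_cancel]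
        · rw [if_neg hγ, hVval]
          rw [if_neg ((hs2.trans h2ω).trans_le (not_lt.1 hγ)).ne',
            if_neg (not_lt.2 (h2ω.le.trans (not_lt.1 hγ))), if_neg hγ]
      have key := DOp_transport (α₁ := α) (α₂ := α) (U := U) (V := V) (φ := φ) (x := x)
        (by
          intro γ γ' h hγ'
          rw [hφval, hφval]
          by_cases h1 : γ < ω
          · rw [if_pos h1]
            by_cases h2 : γ' < ω
            · rw [if_pos h2]; exact add_lt_add_right h 2
            · rw [if_neg h2]; exact (hφω γ h1).trans_le (not_lt.1 h2)
          · rw [if_neg h1]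
            by_cases h2 : γ' < ω
            · exact absurd (h.trans h2) h1
            · rw [if_neg h2]; exact h)
        (by
          intro γ hγ
          rw [hφval]
          split_ifs with h1
          · exact (hφω γ h1).trans_le hω
          · exact hγ)
        (by
          intro γ hγ
          rw [hφval]
          split_ifs with h1
          · have hpar2 : OrdEven (2 + γ) ↔ OrdEven γ := by
              obtain ⟨n, rfl⟩ := lt_omega0.1 h1
              rw [show (2 : Ordinal) + n = (n : Ordinal) + 2 from by norm_cast; ring]
              exact ordEven_add_two _
            unfold SameParity
            tauto
          · exact Iff.rfl)
        (fun γ _ => hVφ γ)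
        (by
          intro δ hδ hxδ hmin
          rw [hVval] at hxδ
          by_cases h1 : δ = s
          · rw [if_pos h1] at hxδ; exact absurd hx hxδ
          rw [if_neg h1] at hxδ
          by_cases h2 : δ < 2
          · rw [if_pos h2] at hxδ; exact absurd hxδ (Set.notMem_empty x)
          rw [if_neg h2] at hxδ
          by_cases h3 : δ < ω
          · left
            refine ⟨δ - 2, ((sub_le_self δ 2).trans_lt h3).trans_le hω, ?_⟩
            have hδ2 : (2 : Ordinal) ≤ δ := not_lt.1 h2
            rw [hφval, if_pos ((sub_le_self δ 2).trans_lt h3),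
              Ordinal.add_sub_cancel_of_le hδ2]
          · left
            refine ⟨δ, hδ, ?_⟩
            rw [hφval, if_neg h3])
      simp only [Set.mem_inter_iff]
      constructor
      · rintro ⟨h1, -⟩; exact key.2 h1
      · intro h; exact ⟨key.1 h, hx⟩
    · have hxG : x ∈ G := hx
      constructor
      · rintro ⟨-, h⟩; exact absurd h hx
      · intro h
        refine absurd h (not_mem_DOp hspar ?_ ?_)
        · rw [hVval, if_pos rfl]; exact hxG
        · intro δ hδ
          have hs1 : s = 1 := by
            rcases hs01 with h' | h'
            · rw [h'] at hδ; exact absurd hδ (not_lt_of_ge (zero_le (a := δ)))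
            · exact h'
          have hδ0 : δ = 0 := by
            rw [hs1] at hδ
            exact Ordinal.lt_one_iff_zero.1 hδ
          rw [hδ0, hVval, if_neg (by rw [hs1]; norm_num), if_pos (by norm_num)]
          exact Set.notMem_empty x


lemma ordEven_add_one (o : Ordinal) : OrdEven (o + 1) ↔ ¬ OrdEven o := ordEven_succ o

set_option maxHeartbeats 1600000 in
lemma part3 {E : Type*} (t : TopologicalSpace E) (α : Ordinal)
    (β : Ordinal) (hβ0 : 0 < β) (hβα : β + α = α)
    (C D L : Set E) (hC : MemD t β C) (hD : MemD t α D) (hL : IsOpen[t] L)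
    (hCL : C ⊆ L) (hLD : L ∩ D = ∅) : MemD t α (C ∪ D) := by
  classical
  obtain ⟨U, hU, rfl⟩ := hC
  obtain ⟨W, hW, rfl⟩ := hD
  -- α is infinite
  have h1α : 1 + α = α := by
    apply le_antisymm
    · calc 1 + α ≤ β + α := add_le_add_left (Order.one_le_iff_pos.2 hβ0) α
        _ = α := hβα
    · exact le_add_self
  have hω : ω ≤ α := by
    by_contra h
    obtain ⟨n, rfl⟩ := lt_omega0.1 (not_le.1 h)
    have : ((1 + n : ℕ) : Ordinal) = (n : Ordinal) := by
      rw [Nat.cast_add, Nat.cast_one, h1α]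
    have := Nat.cast_injective this
    omega
  have hnatabs : ∀ k : ℕ, (k : Ordinal) + α = α := fun k =>
    nat_add_absorb (nat_lt_omega0 k) hω
  set ε : Ordinal := if SameParity β α then 0 else 1 with hεdef
  have hε01 : ε = 0 ∨ ε = 1 := by rw [hεdef]; split_ifs <;> simp
  set sv : Ordinal := if SameParity β α then 2 else 1 with hsvdef
  set tv : Ordinal := if OrdEven β then 4 else 3 with htvdef
  set S : Ordinal := β + sv with hSdef
  set T : Ordinal := β + tv with hTdef
  have hsv12 : sv = 2 ∨ sv = 1 := by rw [hsvdef]; split_ifs <;> simp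
  have htv34 : tv = 4 ∨ tv = 3 := by rw [htvdef]; split_ifs <;> simp
  have hsvtv : sv < tv := by
    rcases hsv12 with h | h <;> rcases htv34 with h' | h' <;> rw [h, h']
    · simpa using natCast_lt_ord (show 2 < 4 by norm_num)
    · simpa using natCast_lt_ord (show 2 < 3 by norm_num)
    · simpa using natCast_lt_ord (show 1 < 4 by norm_num)
    · simpa using natCast_lt_ord (show 1 < 3 by norm_num)
  have hST : S < T := by rw [hSdef, hTdef]; exact add_lt_add_right hsvtv β
  have hSpar : SameParity S α := by
    rw [hSdef, hsvdef]
    split_ifs with h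
    · have : OrdEven (β + 2) ↔ OrdEven β := ordEven_add_two β
      unfold SameParity at h ⊢; tauto
    · have : OrdEven (β + 1) ↔ ¬ OrdEven β := ordEven_add_one β
      rw [not_sameParity_iff] at h
      unfold SameParity; tauto
  have hTeven : OrdEven T := by
    rw [hTdef, htvdef]
    split_ifs with h
    · have h4 : β + 4 = β + 2 + 2 := by rw [add_assoc]; norm_num
      rw [h4, ordEven_add_two, ordEven_add_two]; exact h
    · have h3 : β + 3 = β + 1 + 2 := by rw [add_assoc]; norm_num
      rw [h3, ordEven_add_two, ordEven_add_one]; exact h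
  have hTabs : ∀ δ, δ < α → T + δ < α := by
    intro δ hδ
    have h4 : tv + α = α := by
      rcases htv34 with h | h <;> rw [h]
      · rw [show (4 : Ordinal) = ((4 : ℕ) : Ordinal) from by norm_cast]; exact hnatabs 4
      · rw [show (3 : Ordinal) = ((3 : ℕ) : Ordinal) from by norm_cast]; exact hnatabs 3
    calc T + δ < T + α := add_lt_add_right hδ T
      _ = β + (tv + α) := by rw [hTdef, add_assoc]
      _ = β + α := by rw [h4]
      _ = α := hβα
  have hεS : ∀ γ, γ < β → γ + ε < S := by
    intro γ hγ
    have h1 : γ + ε ≤ β := by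
      rcases hε01 with h | h
      · rw [h, add_zero]; exact hγ.le
      · rw [h, add_one_eq_succ]; exact Order.succ_le_of_lt hγ
    have h2 : β < S := by
      rw [hSdef]
      apply lt_add_of_pos_right
      rcases hsv12 with h | h <;> rw [h] <;> norm_num
    exact h1.trans_lt h2
  have hTα : T < α := by simpa using hTabs 0 (lt_of_lt_of_le omega0_pos hω)
  have hSα : S < α := hST.trans hTα
  -- the sequence
  set V : Ordinal → Set E := fun ξ =>
    if ξ < T then
      (if ξ = S then L else if h : ∃ γ, γ < β ∧ ξ = γ + ε then U h.choose ∩ L else ∅)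
    else W (ξ - T) ∪ L with hVdef
  have hVval : ∀ ξ, V ξ = if ξ < T then
      (if ξ = S then L else if h : ∃ γ, γ < β ∧ ξ = γ + ε then U h.choose ∩ L else ∅)
    else W (ξ - T) ∪ L := fun _ => rfl
  have hadd_eps_inj : ∀ γ γ' : Ordinal, γ + ε = γ' + ε → γ = γ' := by
    intro γ γ' h
    rcases hε01 with he | he
    · rwa [he, add_zero, add_zero] at h
    · rw [he, add_one_eq_succ, add_one_eq_succ] at h
      exact Order.succ_eq_succ_iff.1 h
  have hVC : ∀ γ, γ < β → V (γ + ε) = U γ ∩ L := by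
    intro γ hγ
    rw [hVval, if_pos ((hεS γ hγ).trans hST), if_neg (hεS γ hγ).ne,
      dif_pos ⟨γ, hγ, rfl⟩]
    congr 1
    have hsp := (⟨γ, hγ, rfl⟩ : ∃ γ', γ' < β ∧ γ + ε = γ' + ε).choose_spec
    exact congrArg U (hadd_eps_inj _ _ hsp.2.symm)
  have hVS : V S = L := by rw [hVval, if_pos hST, if_pos rfl]
  have hVT : ∀ δ, V (T + δ) = W δ ∪ L := by
    intro δ
    rw [hVval, if_neg (not_lt.2 (le_self_add : T ≤ T + δ)), Ordinal.add_sub_cancel]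
  have hxD_empty : ∀ x, x ∈ L → x ∉ DOp α W := by
    intro x hx hD
    have : x ∈ L ∩ DOp α W := ⟨hx, hD⟩
    rw [hLD] at this
    exact this
  refine ⟨V, ?_, ?_⟩
  · intro ξ hξ
    rw [hVval]
    split_ifs with h1 h2 h3
    · exact hL
    · exact (hU _ h3.choose_spec.1).inter hL
    · exact isOpen_empty
    · exact (hW _ ((sub_le_self ξ T).trans_lt hξ)).union hL
  · ext x
    by_cases hxL : x ∈ L
    · -- x ∈ L : compare with DOp β U
      have key := DOp_transport (α₁ := β) (α₂ := α) (U := U) (V := V)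
        (φ := fun γ => γ + ε) (x := x)
        (by
          intro γ γ' h hγ'
          show γ + ε < γ' + ε
          rcases hε01 with he | he
          · rw [he, add_zero, add_zero]; exact h
          · rw [he, add_one_eq_succ, add_one_eq_succ]; exact Order.succ_lt_succ h)
        (fun γ hγ => ((hεS γ hγ).trans hST).trans hTα)
        (by
          intro γ hγ
          show SameParity (γ + ε) α ↔ SameParity γ β
          rcases hε01 with he | he
          · rw [he, add_zero]
            have hsp : SameParity β α := by
              by_contra h
              rw [hεdef, if_neg h] at he
              exact one_ne_zero he
            unfold SameParity at hsp ⊢; tauto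
          · rw [he]
            have hsp : ¬ SameParity β α := by
              intro h
              rw [hεdef, if_pos h] at he
              exact zero_ne_one he
            rw [not_sameParity_iff] at hsp
            have h1 := ordEven_add_one γ
            unfold SameParity; tauto)
        (by
          intro γ hγ
          rw [hVC γ hγ, Set.mem_inter_iff]
          exact ⟨fun h => h.1, fun h => ⟨h, hxL⟩⟩)
        (by
          intro δ hδ hxδ hmin
          by_cases h1 : δ < T
          · by_cases h2 : δ = S
            · subst h2
              right
              exact ⟨hSpar, fun γ hγ _ => hεS γ hγ⟩
            · rw [hVval, if_pos h1, if_neg h2] at hxδ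
              by_cases h3 : ∃ γ, γ < β ∧ δ = γ + ε
              · obtain ⟨γ, hγβ, rfl⟩ := h3
                exact Or.inl ⟨γ, hγβ, rfl⟩
              · rw [dif_neg h3] at hxδ
                exact absurd hxδ (Set.notMem_empty x)
          · exfalso
            refine hmin S (hST.trans_le (not_lt.1 h1)) ?_
            rw [hVS]; exact hxL)
      have hxD : x ∉ DOp α W := hxD_empty x hxL
      simp only [Set.mem_union]
      constructor
      · rintro (h | h)
        · exact key.2 h
        · exact absurd h hxD
      · intro h; exact Or.inl (key.1 h)
    · -- x ∉ L : compare with DOp α W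
      have key := DOp_transport (α₁ := α) (α₂ := α) (U := W) (V := V)
        (φ := fun δ => T + δ) (x := x)
        (fun γ γ' h _ => add_lt_add_right h T)
        (fun δ hδ => hTabs δ hδ)
        (by
          intro δ hδ
          show SameParity (T + δ) α ↔ SameParity δ α
          have := ordEven_add_right hTeven δ
          unfold SameParity; tauto)
        (by
          intro δ hδ
          rw [hVT δ, Set.mem_union]
          exact ⟨fun h => h.resolve_right hxL, fun h => Or.inl h⟩)
        (by
          intro δ hδ hxδ hmin
          by_cases h1 : δ < T
          · exfalso
            rw [hVval, if_pos h1] at hxδ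
            by_cases h2 : δ = S
            · rw [if_pos h2] at hxδ; exact hxL hxδ
            · rw [if_neg h2] at hxδ
              by_cases h3 : ∃ γ, γ < β ∧ δ = γ + ε
              · rw [dif_pos h3] at hxδ; exact hxL hxδ.2
              · rw [dif_neg h3] at hxδ; exact Set.notMem_empty x hxδ
          · left
            refine ⟨δ - T, (sub_le_self δ T).trans_lt hδ, ?_⟩
            show δ = T + (δ - T)
            rw [Ordinal.add_sub_cancel_of_le (not_lt.1 h1)])
      have hxC : x ∉ DOp β U := fun h => hxL (hCL h)
      simp only [Set.mem_union]
      constructor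
      · rintro (h | h)
        · exact absurd h hxC
        · exact key.2 h
      · intro h; exact Or.inr (key.1 h)

end DAux

/-- Closure properties of the difference classes `D_α(E)`:
intersections with open sets, with closed sets (for infinite `α`),
and unions with a `D_β` set inside an open set disjoint from the `D_α` set
(when `β + α = α`). -/
theorem D_class_operations {E : Type*} (t : TopologicalSpace E)
    (α : Ordinal) (hα : 1 ≤ α) :
    (∀ (A L : Set E), MemD t α A → IsOpen[t] L → MemD t α (A ∩ L)) ∧
    (Ordinal.omega0 ≤ α →
      ∀ (A F : Set E), MemD t α A → IsClosed[t] F → MemD t α (A ∩ F)) ∧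
    (∀ β : Ordinal, 0 < β → β + α = α →
      ∀ (C D L : Set E), MemD t β C → MemD t α D → IsOpen[t] L →
        C ⊆ L → L ∩ D = ∅ → MemD t α (C ∪ D)) := by
  refine ⟨fun A L hA hL => DAux.part1 t α A L hA hL,
    fun hω A F hA hF => DAux.part2 t α hω A F hA hF,
    fun β hβ0 hβα C D L hC hD hL hCL hLD =>
      DAux.part3 t α β hβ0 hβα C D L hC hD hL hCL hLD⟩
end

section
/- The family 𝒮₂ = {X ⊆ ℕ : ∃ n, 2n ∈ X and 2n+1 ∉ X} is Wadge complete for Σ⁰₂(𝒫(ℕ)): 𝒮₂ ∈ Σ⁰₂(𝒫(ℕ)) and every family in Σ⁰₂(𝒫(ℕ)) is Wadge reducible to 𝒮₂. -/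
open Topology

/-- Membership in `Σ⁰₂(E)`: countable unions of differences of open sets. -/
def MemSigma2 {E : Type*} (t : TopologicalSpace E) (A : Set E) : Prop :=
  ∃ U V : ℕ → Set E, (∀ n, IsOpen[t] (U n)) ∧ (∀ n, IsOpen[t] (V n)) ∧
    A = ⋃ n, U n \ V n

lemma mem_elt_open (a : ℕ) : IsOpen[ScottPN] {X : Set ℕ | a ∈ X} :=
  TopologicalSpace.isOpen_generateFrom_of_mem
    ⟨{a}, Set.finite_singleton _, by ext X; simp [Set.singleton_subset_iff]⟩

/-- The reduction map. -/
def redF (U V : ℕ → Set (Set ℕ)) (X : Set ℕ) : Set ℕ :=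
  {m | if m % 2 = 0 then X ∈ U (m / 2) else X ∈ V (m / 2)}

lemma redF_even (U V : ℕ → Set (Set ℕ)) (X : Set ℕ) (n : ℕ) :
    2 * n ∈ redF U V X ↔ X ∈ U n := by
  have h1 : (2 * n) % 2 = 0 := by omega
  have h2 : (2 * n) / 2 = n := by omega
  simp only [redF, Set.mem_setOf_eq, h1, if_true, h2]

lemma redF_odd (U V : ℕ → Set (Set ℕ)) (X : Set ℕ) (n : ℕ) :
    2 * n + 1 ∈ redF U V X ↔ X ∈ V n := by
  have h1 : ¬ (2 * n + 1) % 2 = 0 := by omega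
  have h2 : (2 * n + 1) / 2 = n := by omega
  simp only [redF, Set.mem_setOf_eq, if_neg h1, h2]

lemma redF_continuous (U V : ℕ → Set (Set ℕ))
    (hU : ∀ n, IsOpen[ScottPN] (U n)) (hV : ∀ n, IsOpen[ScottPN] (V n)) :
    Continuous[ScottPN, ScottPN] (redF U V) := by
  letI : TopologicalSpace (Set ℕ) := ScottPN
  refine continuous_generateFrom_iff.mpr ?_
  rintro s ⟨B, hB, rfl⟩
  have : redF U V ⁻¹' {X : Set ℕ | B ⊆ X}
      = ⋂ m ∈ B, {X : Set ℕ | if m % 2 = 0 then X ∈ U (m / 2) else X ∈ V (m / 2)} := by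
    ext X
    simp [redF, Set.subset_def]
  rw [this]
  refine Set.Finite.isOpen_biInter hB ?_
  intro m _
  by_cases h : m % 2 = 0 <;> simp only [h, if_true, if_false]
  · exact hU _
  · exact hV _

/-- The family `𝒮₂ = {X | ∃ n, 2n ∈ X ∧ 2n+1 ∉ X}` is Wadge complete for
`Σ⁰₂(𝒫(ℕ))`. -/
theorem S2_wadge_complete_sigma2 :
    MemSigma2 ScottPN {X : Set ℕ | ∃ n : ℕ, 2 * n ∈ X ∧ 2 * n + 1 ∉ X} ∧
    ∀ A : Set (Set ℕ), MemSigma2 ScottPN A →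
      WadgeLe A {X : Set ℕ | ∃ n : ℕ, 2 * n ∈ X ∧ 2 * n + 1 ∉ X} := by
  constructor
  · refine ⟨fun n => {X | 2 * n ∈ X}, fun n => {X | 2 * n + 1 ∈ X},
      fun n => mem_elt_open _, fun n => mem_elt_open _, ?_⟩
    ext X
    simp [Set.mem_iUnion]
  · rintro A ⟨U, V, hU, hV, rfl⟩
    refine ⟨redF U V, redF_continuous U V hU hV, ?_⟩
    ext X
    simp only [Set.mem_iUnion, Set.mem_preimage, Set.mem_setOf_eq, Set.mem_diff,
      redF_even, redF_odd]
end

section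
/- For every countable ordinal α < ω₁ there exists an 𝒮₂-alternating increasing chain of length α in 𝒫(ℕ): a family (X_δ)_{δ<α} of subsets of ℕ with X_δ ⊊ X_η whenever δ < η < α, and such that X_δ ∈ 𝒮₂ if and only if δ is even, where 𝒮₂ = {X ⊆ ℕ : ∃ n, 2n ∈ X and 2n+1 ∉ X}. -/
open Topology

/-- For every countable ordinal `α` there is an `𝒮₂`-alternating increasing
chain of length `α` in `𝒫(ℕ)`, where
`𝒮₂ = {X | ∃ n, 2n ∈ X ∧ 2n+1 ∉ X}`. -/
theorem exists_S2_alternating_increasing_chain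
    (α : Ordinal) (hα : α.card ≤ Cardinal.aleph0) :
    ∃ X : Ordinal → Set ℕ,
      (∀ δ η : Ordinal, δ < η → η < α → X δ ⊂ X η) ∧
      (∀ δ < α, (X δ ∈ {X : Set ℕ | ∃ n : ℕ, 2 * n ∈ X ∧ 2 * n + 1 ∉ X}) ↔ OrdEven δ) := by
  have hc : Countable (Set.Iio α) := by
    rw [← Cardinal.mk_le_aleph0_iff, Ordinal.mk_Iio_ordinal]
    exact Cardinal.lift_le_aleph0.2 hα
  obtain ⟨f, hf⟩ := exists_injective_nat (Set.Iio α)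
  set F : Ordinal → ℕ := fun γ => if h : γ < α then f ⟨γ, h⟩ else 0 with hF
  have hFinj : ∀ γ δ : Ordinal, γ < α → δ < α → F γ = F δ → γ = δ := by
    intro γ δ hγ hδ h
    simp only [hF, dif_pos hγ, dif_pos hδ] at h
    exact Subtype.ext_iff.1 (hf h)
  refine ⟨fun δ => {m | (∃ γ, γ < δ ∧ γ < α ∧ 4 * F γ ≤ m ∧ m ≤ 4 * F γ + 3) ∨
      (OrdEven δ ∧ m = 4 * F δ + 2)}, ?_, ?_⟩
  · intro δ η hδη hηα
    constructor
    · intro m hm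
      rcases hm with ⟨γ, h1, h2, h3, h4⟩ | ⟨he, hm⟩
      · exact Or.inl ⟨γ, h1.trans hδη, h2, h3, h4⟩
      · exact Or.inl ⟨δ, hδη, hδη.trans hηα, by omega, by omega⟩
    · intro hsub
      have h3 : (4 * F δ + 3) ∈ ({m | (∃ γ, γ < η ∧ γ < α ∧ 4 * F γ ≤ m ∧ m ≤ 4 * F γ + 3) ∨
          (OrdEven η ∧ m = 4 * F η + 2)} : Set ℕ) :=
        Or.inl ⟨δ, hδη, hδη.trans hηα, by omega, by omega⟩
      have h4 := hsub h3
      rcases h4 with ⟨γ, h1, h2, h3, h4⟩ | ⟨he, hm⟩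
      · have : F γ = F δ := by omega
        exact absurd (hFinj γ δ h2 (hδη.trans hηα) this) (ne_of_lt h1)
      · omega
  · intro δ hδα
    constructor
    · rintro ⟨n, hn1, hn2⟩
      rcases hn1 with ⟨γ, h1, h2, h3, h4⟩ | ⟨he, hm⟩
      · exact absurd (Or.inl ⟨γ, h1, h2, by omega, by omega⟩) hn2
      · exact he
    · intro he
      refine ⟨2 * F δ + 1, Or.inr ⟨he, by ring⟩, ?_⟩
      rintro (⟨γ, h1, h2, h3, h4⟩ | ⟨_, hm⟩)
      · have : F γ = F δ := by omega
        exact absurd (hFinj γ δ h2 hδα this) (ne_of_lt h1)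
      · omega
end
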